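/- arXiv:2308.06511 — 7 statements merged into one kernel-verified Lean document; each statement's English description precedes it below -/
import Mathlib

section
/- Under the same hypotheses and definitions as before (fixed integer n ≥ 0, p_k, ϑ_k, Θ_k := d_kᵀ ϑ_k), assume additionally that the limit τ := lim_{k→∞} k^{δ+n+2}(Θ_k − Θ_{k−1}) is nonzero. Then for every ε > 0 there exists an integer k₂ such that |Θ − Θ_k| ≤ (1+ε) · k · |Θ_k − Θ_{k−1}| / (Re(δ) + n + 1) for all integers k ≥ k₂. -/
open Filter Topology Asymptotics Matrix Complex

lemma step_ineq (s : ℝ) (hs : 1 < s) (x : ℝ) (hx : 1 ≤ x) :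
    (s - 1) * (x + 1) ^ (-s) ≤ x ^ (1 - s) - (x + 1) ^ (1 - s) := by
  have hx0 : (0:ℝ) < x := lt_of_lt_of_le one_pos hx
  obtain ⟨c, hc, hc'⟩ := exists_hasDerivAt_eq_slope (fun y : ℝ => y ^ (1 - s))
      (fun y : ℝ => (1 - s) * y ^ (1 - s - 1)) (by linarith : x < x + 1)
      (by
        intro y hy
        rw [Set.mem_Icc] at hy
        exact (Real.continuousAt_rpow_const y (1 - s)
          (Or.inl (ne_of_gt (lt_of_lt_of_le hx0 hy.1)))).continuousWithinAt)
      (by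
        intro y hy
        rw [Set.mem_Ioo] at hy
        exact Real.hasDerivAt_rpow_const (Or.inl (ne_of_gt (lt_trans hx0 hy.1))))
  simp only [Set.mem_Ioo] at hc
  have hc0 : (0:ℝ) < c := lt_trans hx0 hc.1
  have hkey : x ^ (1 - s) - (x + 1) ^ (1 - s) = (s - 1) * c ^ (-s) := by
    have h1 : (1 - s) * c ^ (1 - s - 1) = ((x+1) ^ (1-s) - x ^ (1-s)) / (x + 1 - x) := hc'
    have h2 : (1 - s - 1 : ℝ) = -s := by ring
    rw [h2] at h1
    have h3 : (x + 1 - x : ℝ) = 1 := by ring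
    rw [h3, div_one] at h1
    linarith [h1]
  rw [hkey]
  have : (x + 1) ^ (-s) ≤ c ^ (-s) :=
    Real.rpow_le_rpow_of_nonpos hc0 hc.2.le (by linarith)
  have hs1 : (0:ℝ) ≤ s - 1 := by linarith
  exact mul_le_mul_of_nonneg_left this hs1

lemma tail_bound (s : ℝ) (hs : 1 < s) (k : ℕ) (hk : 1 ≤ k) (M : ℕ) :
    ∑ j ∈ Finset.Ioc k M, ((j:ℝ)) ^ (-s) ≤ (k:ℝ) ^ (1 - s) / (s - 1) := by
  have hs1 : (0:ℝ) < s - 1 := by linarith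
  rcases le_or_gt k M with hkM | hkM
  · have key : ∀ M, k ≤ M → ∑ j ∈ Finset.Ioc k M, ((j:ℝ)) ^ (-s)
        ≤ ((k:ℝ) ^ (1 - s) - (M:ℝ) ^ (1 - s)) / (s - 1) := by
      intro M hM
      induction M, hM using Nat.le_induction with
      | base => simp
      | succ M hM ih =>
        rw [Finset.sum_Ioc_succ_top hM]
        have hM1 : (1:ℝ) ≤ (M:ℝ) := by exact_mod_cast le_trans hk hM
        have hstep := step_ineq s hs (M:ℝ) hM1
        have hcast : ((M + 1 : ℕ) : ℝ) = (M:ℝ) + 1 := by push_cast; ring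
        rw [hcast]
        have h2 : ((M:ℝ) + 1) ^ (-s) ≤ ((M:ℝ) ^ (1-s) - ((M:ℝ)+1) ^ (1-s)) / (s - 1) := by
          rw [le_div_iff₀ hs1]; linarith [hstep]
        calc ∑ j ∈ Finset.Ioc k M, ((j:ℝ)) ^ (-s) + ((M:ℝ) + 1) ^ (-s)
            ≤ ((k:ℝ) ^ (1-s) - (M:ℝ) ^ (1-s)) / (s-1)
              + ((M:ℝ) ^ (1-s) - ((M:ℝ)+1) ^ (1-s)) / (s-1) := add_le_add ih h2
          _ = ((k:ℝ) ^ (1-s) - ((M:ℝ)+1) ^ (1-s)) / (s-1) := by ring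
    refine le_trans (key M hkM) ?_
    have : (0:ℝ) ≤ (M:ℝ) ^ (1-s) := Real.rpow_nonneg (Nat.cast_nonneg M) _
    exact (div_le_div_iff_of_pos_right hs1).mpr (by linarith)
  · rw [Finset.Ioc_eq_empty (by omega)]
    simp only [Finset.sum_empty]
    positivity

lemma telescope_sum (f : ℕ → ℂ) (k : ℕ) : ∀ M, k ≤ M →
    ∑ j ∈ Finset.Ioc k M, (f j - f (j - 1)) = f M - f k := by
  intro M hM
  induction M, hM using Nat.le_induction with
  | base => simp
  | succ M hM ih =>
    rw [Finset.sum_Ioc_succ_top hM, ih]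
    have : (M + 1) - 1 = M := by omega
    rw [this]; ring

lemma seq_bound (Θ : ℂ) (Θseq : ℕ → ℂ) (s : ℝ) (hs : 1 < s) (T : ℝ) (hT : 0 < T)
    (hconv : Tendsto Θseq atTop (𝓝 Θ))
    (hA : Tendsto (fun k : ℕ => (k:ℝ) ^ s * ‖Θseq k - Θseq (k - 1)‖)
      atTop (𝓝 T)) :
    ∀ ε : ℝ, 0 < ε → ∃ k₂ : ℕ, ∀ k ≥ k₂, ‖Θ - Θseq k‖ ≤
      (1 + ε) * (k:ℝ) * ‖Θseq k - Θseq (k - 1)‖ / (s - 1) := by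
  intro ε hε
  set η : ℝ := ε / (ε + 2) with hηdef
  have hη0 : 0 < η := by positivity
  have hη1 : η < 1 := by rw [hηdef, div_lt_one (by linarith)]; linarith
  have hkey : (1 + η) = (1 + ε) * (1 - η) := by
    rw [hηdef]; field_simp; ring
  obtain ⟨N, hN⟩ := Metric.tendsto_atTop.mp hA (η * T) (by positivity)
  refine ⟨max N 1, fun k hk => ?_⟩
  have hkN : N ≤ k := le_trans (le_max_left _ _) hk
  have hk1 : 1 ≤ k := le_trans (le_max_right _ _) hk
  have hk0 : (0:ℝ) < (k:ℝ) := by exact_mod_cast hk1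
  set A : ℕ → ℝ := fun j => ‖Θseq j - Θseq (j - 1)‖ with hAdef
  have hA0 : ∀ j, 0 ≤ A j := fun j => norm_nonneg _
  have hbounds : ∀ j, N ≤ j → (1 - η) * T ≤ (j:ℝ) ^ s * A j ∧
      (j:ℝ) ^ s * A j ≤ (1 + η) * T := by
    intro j hj
    have := hN j hj
    rw [Real.dist_eq, abs_sub_lt_iff] at this
    constructor <;> nlinarith [this.1, this.2]
  have hAj : ∀ j, N ≤ j → 1 ≤ j → A j ≤ (1 + η) * T * (j:ℝ) ^ (-s) := by
    intro j hjN hj1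
    have hj0 : (0:ℝ) < (j:ℝ) := by exact_mod_cast hj1
    have hjs : (0:ℝ) < (j:ℝ) ^ s := Real.rpow_pos_of_pos hj0 s
    have h1 := (hbounds j hjN).2
    have h2 : (j:ℝ) ^ (-s) = ((j:ℝ) ^ s)⁻¹ := Real.rpow_neg hj0.le s
    rw [h2, ← div_eq_mul_inv, le_div_iff₀ hjs]
    calc A j * (j:ℝ) ^ s = (j:ℝ) ^ s * A j := by ring
      _ ≤ (1 + η) * T := h1
  -- main tail estimate
  have hmain : ‖Θ - Θseq k‖ ≤ (1 + η) * T * (k:ℝ) ^ (1 - s) / (s - 1) := by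
    have htend : Tendsto (fun M => ‖Θseq M - Θseq k‖) atTop
        (𝓝 (‖Θ - Θseq k‖)) := by
      have : Tendsto (fun M => Θseq M - Θseq k) atTop (𝓝 (Θ - Θseq k)) :=
        hconv.sub tendsto_const_nhds
      simpa using this.norm
    refine le_of_tendsto htend ?_
    filter_upwards [eventually_ge_atTop k] with M hM
    rw [← telescope_sum Θseq k M hM]
    calc ‖∑ j ∈ Finset.Ioc k M, (Θseq j - Θseq (j - 1))‖
        ≤ ∑ j ∈ Finset.Ioc k M, A j := by
          exact norm_sum_le _ _
      _ ≤ ∑ j ∈ Finset.Ioc k M, (1 + η) * T * (j:ℝ) ^ (-s) := by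
          refine Finset.sum_le_sum fun j hj => ?_
          rw [Finset.mem_Ioc] at hj
          exact hAj j (by omega) (by omega)
      _ = (1 + η) * T * ∑ j ∈ Finset.Ioc k M, ((j:ℝ)) ^ (-s) := by
          rw [Finset.mul_sum]
      _ ≤ (1 + η) * T * ((k:ℝ) ^ (1 - s) / (s - 1)) := by
          refine mul_le_mul_of_nonneg_left (tail_bound s hs k hk1 M) ?_
          positivity
      _ = (1 + η) * T * (k:ℝ) ^ (1 - s) / (s - 1) := by ring
  have hlow := (hbounds k hkN).1
  have hs1 : (0:ℝ) < s - 1 := by linarith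
  have hks : (0:ℝ) ≤ (k:ℝ) ^ (1 - s) := Real.rpow_nonneg hk0.le _
  calc ‖Θ - Θseq k‖ ≤ (1 + η) * T * (k:ℝ) ^ (1 - s) / (s - 1) := hmain
    _ = (1 + ε) * ((1 - η) * T) * (k:ℝ) ^ (1 - s) / (s - 1) := by rw [hkey]; ring
    _ ≤ (1 + ε) * ((k:ℝ) ^ s * A k) * (k:ℝ) ^ (1 - s) / (s - 1) := by
        have : (1 + ε) * ((1 - η) * T) * (k:ℝ) ^ (1 - s) ≤
            (1 + ε) * ((k:ℝ) ^ s * A k) * (k:ℝ) ^ (1 - s) := by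
          refine mul_le_mul_of_nonneg_right (mul_le_mul_of_nonneg_left hlow (by linarith)) hks
        exact (div_le_div_iff_of_pos_right hs1).mpr this
    _ = (1 + ε) * (k:ℝ) * A k / (s - 1) := by
        have : (k:ℝ) ^ s * (k:ℝ) ^ (1 - s) = (k:ℝ) := by
          rw [← Real.rpow_add hk0]; norm_num
        rw [show (1 + ε) * ((k:ℝ) ^ s * A k) * (k:ℝ) ^ (1 - s)
            = (1 + ε) * ((k:ℝ) ^ s * (k:ℝ) ^ (1 - s)) * A k from by ring, this]
/-- The a posteriori error estimate of Theorem 4 of the paper: if additionally the limit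
`τ = lim_k k^{δ+n+2}(Θ_k − Θ_{k−1})` is nonzero, then for every `ε > 0` eventually
`|Θ − Θ_k| ≤ (1+ε)·k·|Θ_k − Θ_{k−1}|/(Re δ + n + 1)`. -/
theorem connection_coefficient_a_posteriori
    (δ : ℂ) (hδ : -1 < δ.re)
    (b₁ b₂ : Fin 2 → ℂ) (hb : LinearIndependent ℂ ![b₁, b₂])
    (dt : ℕ → Fin 2 → ℂ) (hdt0 : dt 0 = b₂)
    (Θ ω : ℂ) (d : ℕ → Fin 2 → ℂ)
    (hd : ∀ m : ℕ,
      (fun k : ℕ => d k - (Θ • b₁ + (ω / Complex.Gamma ((k : ℂ) + 1)) •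
          ∑ ℓ ∈ Finset.range (m + 1),
            ((-1 : ℂ) ^ ℓ * Complex.Gamma ((ℓ : ℂ) + δ)
              * Complex.Gamma ((k : ℂ) - ℓ + 1 - δ)) • dt ℓ))
        =O[atTop] fun k : ℕ => (k : ℝ) ^ (-δ.re - m - 1))
    (n : ℕ)
    (p : ℕ → Fin 2 → ℂ)
    (hp : ∀ k : ℕ, p k = b₂ + ∑ ℓ ∈ Finset.Icc 1 n,
        (∏ m ∈ Finset.range ℓ, (((m : ℂ) + δ) / ((m : ℂ) + δ - k))) • dt ℓ)
    (J : Matrix (Fin 2) (Fin 2) ℂ) (hJ : J = !![0, 1; -1, 0])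
    (ϑ : ℕ → Fin 2 → ℂ)
    (hϑ : ∀ k : ℕ, ϑ k = ((J.mulVec (p k)) ⬝ᵥ b₁)⁻¹ • J.mulVec (p k))
    (Θseq : ℕ → ℂ) (hΘseq : ∀ k : ℕ, Θseq k = (d k) ⬝ᵥ (ϑ k))
    (τ : ℂ) (hτ : τ ≠ 0)
    (hlim : Tendsto (fun k : ℕ => (k : ℂ) ^ (δ + (n : ℂ) + 2) * (Θseq k - Θseq (k - 1)))
      atTop (𝓝 τ)) :
    ∀ ε : ℝ, 0 < ε → ∃ k₂ : ℕ, ∀ k ≥ k₂,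
      ‖Θ - Θseq k‖ ≤
        (1 + ε) * (k : ℝ) * ‖Θseq k - Θseq (k - 1)‖ / (δ.re + n + 1) := by
  -- J acting on vectors
  have hmul : ∀ v : Fin 2 → ℂ, J.mulVec v = ![v 1, -v 0] := by
    intro v; funext i
    fin_cases i <;>
      simp [hJ, Matrix.mulVec, dotProduct, Fin.sum_univ_two, Matrix.vecHead, Matrix.vecTail]
  -- the limit of the normalizing factor
  set cLim : ℂ := b₂ 1 * b₁ 0 - b₂ 0 * b₁ 1 with hcLimdef
  have hcLim : cLim ≠ 0 := by
    have h1 : IsUnit (Matrix.of ![b₁, b₂]) :=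
      Matrix.linearIndependent_rows_iff_isUnit.mp hb
    have h2 : IsUnit (Matrix.of ![b₁, b₂]).det := (Matrix.isUnit_iff_isUnit_det _).mp h1
    have h3 : (Matrix.of ![b₁, b₂]).det = b₁ 0 * b₂ 1 - b₁ 1 * b₂ 0 := by
      rw [Matrix.det_fin_two]; simp [Matrix.of_apply]
    rw [h3, isUnit_iff_ne_zero] at h2
    intro h; apply h2; rw [← h, hcLimdef]; ring
  -- limits of the product coefficients
  have hfac : ∀ m : ℕ, Tendsto (fun k : ℕ => ((m : ℂ) + δ) / ((m : ℂ) + δ - (k : ℂ)))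
      atTop (𝓝 0) := by
    intro m
    have hden : Tendsto (fun k : ℕ => ‖(m : ℂ) + δ - (k : ℂ)‖) atTop atTop := by
      refine tendsto_atTop_mono' atTop ?_
        (tendsto_atTop_add_const_right atTop (-‖(m : ℂ) + δ‖) tendsto_natCast_atTop_atTop)
      filter_upwards with k
      have h1 : ‖(k : ℂ)‖ - ‖(m : ℂ) + δ‖ ≤ ‖(k : ℂ) - ((m : ℂ) + δ)‖ := norm_sub_norm_le _ _
      have h2 : ‖(k : ℂ) - ((m : ℂ) + δ)‖ = ‖(m : ℂ) + δ - (k : ℂ)‖ := norm_sub_rev _ _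
      have h3 : ‖(k : ℂ)‖ = (k : ℝ) := by
        rw [Complex.norm_natCast]
      simp only [h3] at h1
      linarith [h1, h2.le, h2.ge]
    have hinv : Tendsto (fun k : ℕ => ((m : ℂ) + δ - (k : ℂ))⁻¹) atTop (𝓝 0) := by
      rw [tendsto_zero_iff_norm_tendsto_zero]
      simp only [norm_inv]
      exact hden.inv_tendsto_atTop
    have h4 : Tendsto (fun k : ℕ => ((m : ℂ) + δ) * ((m : ℂ) + δ - (k : ℂ))⁻¹) atTop
        (𝓝 (((m : ℂ) + δ) * 0)) := tendsto_const_nhds.mul hinv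
    simpa [div_eq_mul_inv] using h4
  have hcoef : ∀ ℓ : ℕ, 1 ≤ ℓ →
      Tendsto (fun k : ℕ => ∏ m ∈ Finset.range ℓ, (((m : ℂ) + δ) / ((m : ℂ) + δ - (k : ℂ))))
        atTop (𝓝 0) := by
    intro ℓ hℓ
    have := tendsto_finset_prod (Finset.range ℓ) (fun m _ => hfac m)
    simpa [Finset.prod_const, zero_pow (by omega : ℓ ≠ 0)] using this
  -- limits of p components
  have hpi : ∀ i, Tendsto (fun k : ℕ => p k i) atTop (𝓝 (b₂ i)) := by
    intro i
    have heq : ∀ k : ℕ, p k i = b₂ i + ∑ ℓ ∈ Finset.Icc 1 n,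
        (∏ m ∈ Finset.range ℓ, (((m : ℂ) + δ) / ((m : ℂ) + δ - (k : ℂ)))) * dt ℓ i := by
      intro k; rw [hp k]; simp [Finset.sum_apply]
    have hlim2 : Tendsto (fun k : ℕ => b₂ i + ∑ ℓ ∈ Finset.Icc 1 n,
        (∏ m ∈ Finset.range ℓ, (((m : ℂ) + δ) / ((m : ℂ) + δ - (k : ℂ)))) * dt ℓ i)
        atTop (𝓝 (b₂ i + ∑ ℓ ∈ Finset.Icc 1 n, 0 * dt ℓ i)) := by
      refine tendsto_const_nhds.add (tendsto_finset_sum _ fun ℓ hℓ => ?_)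
      exact (hcoef ℓ (Finset.mem_Icc.mp hℓ).1).mul tendsto_const_nhds
    simp only [zero_mul, Finset.sum_const_zero, add_zero] at hlim2
    exact hlim2.congr fun k => (heq k).symm
  -- the normalizing factor
  set ck : ℕ → ℂ := fun k => (J.mulVec (p k)) ⬝ᵥ b₁ with hckdef
  have hckeq : ∀ k, ck k = p k 1 * b₁ 0 - p k 0 * b₁ 1 := by
    intro k
    rw [hckdef]
    simp [hmul, dotProduct, Fin.sum_univ_two, Matrix.vecHead, Matrix.vecTail]
    ring
  have hck : Tendsto ck atTop (𝓝 cLim) := by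
    have := ((hpi 1).mul tendsto_const_nhds).sub ((hpi 0).mul tendsto_const_nhds)
      (f := fun k => p k 1 * b₁ 0) (g := fun k => p k 0 * b₁ 1)
    exact Tendsto.congr (fun k => (hckeq k).symm) this
  -- components of ϑ
  have hϑeq : ∀ k, ϑ k 0 = (ck k)⁻¹ * p k 1 ∧ ϑ k 1 = (ck k)⁻¹ * (-(p k 0)) := by
    intro k
    rw [hϑ k]
    constructor <;> simp [hmul, hckdef]
  have hϑ0 : Tendsto (fun k => ϑ k 0) atTop (𝓝 (cLim⁻¹ * b₂ 1)) := by
    exact Tendsto.congr (fun k => ((hϑeq k).1).symm) ((hck.inv₀ hcLim).mul (hpi 1))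
  have hϑ1 : Tendsto (fun k => ϑ k 1) atTop (𝓝 (cLim⁻¹ * (-(b₂ 0)))) := by
    exact Tendsto.congr (fun k => ((hϑeq k).2).symm) ((hck.inv₀ hcLim).mul (hpi 0).neg)
  -- b₁ ⬝ᵥ ϑ k → 1
  have hb₁ϑ : Tendsto (fun k => b₁ ⬝ᵥ ϑ k) atTop (𝓝 1) := by
    have h1 : Tendsto (fun k => b₁ 0 * ϑ k 0 + b₁ 1 * ϑ k 1) atTop
        (𝓝 (b₁ 0 * (cLim⁻¹ * b₂ 1) + b₁ 1 * (cLim⁻¹ * (-(b₂ 0))))) :=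
      (tendsto_const_nhds.mul hϑ0).add (tendsto_const_nhds.mul hϑ1)
    have h2 : b₁ 0 * (cLim⁻¹ * b₂ 1) + b₁ 1 * (cLim⁻¹ * (-(b₂ 0))) = 1 := by
      field_simp [hcLimdef]
      ring
    rw [h2] at h1
    exact h1.congr fun k => by simp [dotProduct, Fin.sum_univ_two, Matrix.vecHead, Matrix.vecTail]
  -- the main-term cancellation
  set W : ℕ → ℕ → Fin 2 → ℂ := fun m k => (ω / Complex.Gamma ((k : ℂ) + 1)) •
      ∑ ℓ ∈ Finset.range (m + 1),
        ((-1 : ℂ) ^ ℓ * Complex.Gamma ((ℓ : ℂ) + δ)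
          * Complex.Gamma ((k : ℂ) - ℓ + 1 - δ)) • dt ℓ with hWdef
  have hpϑ : ∀ k, p k ⬝ᵥ ϑ k = 0 := by
    intro k
    have hinner : p k ⬝ᵥ (J.mulVec (p k)) = 0 := by
      rw [hmul]
      simp [dotProduct, Fin.sum_univ_two, Matrix.vecHead, Matrix.vecTail]
      ring
    rw [hϑ k, dotProduct_smul, hinner, smul_zero]
  obtain ⟨m, hWϑ⟩ : ∃ m : ℕ, Tendsto (fun k => W m k ⬝ᵥ ϑ k) atTop (𝓝 0) := by
    by_cases hδ0 : δ = 0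
    · refine ⟨0, ?_⟩
      have : ∀ k : ℕ, W 0 k ⬝ᵥ ϑ k = 0 := by
        intro k
        rw [hWdef]
        simp [Finset.sum_range_one, hδ0, Complex.Gamma_zero]
      simpa [this] using tendsto_const_nhds (α := ℂ) (f := atTop (α := ℕ))
    · refine ⟨n, ?_⟩
      obtain ⟨K₁, hK₁⟩ := exists_nat_gt ((n : ℝ) + δ.re)
      have hev : ∀ k : ℕ, K₁ ≤ k → W n k ⬝ᵥ ϑ k = 0 := by
        intro k hk
        have hkre : (n : ℝ) + δ.re < (k : ℝ) := lt_of_lt_of_le hK₁ (by exact_mod_cast hk)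
        have key : ∀ ℓ : ℕ, ℓ ≤ n →
            (-1 : ℂ) ^ ℓ * Complex.Gamma ((ℓ : ℂ) + δ)
              * Complex.Gamma ((k : ℂ) - ℓ + 1 - δ)
            = Complex.Gamma δ * Complex.Gamma ((k : ℂ) + 1 - δ)
              * ∏ m ∈ Finset.range ℓ, (((m : ℂ) + δ) / ((m : ℂ) + δ - (k : ℂ))) := by
          intro ℓ
          induction ℓ with
          | zero => intro _; simp
          | succ ℓ ih =>
            intro hℓn
            have hℓn' : ℓ ≤ n := by omega
            have ihh := ih hℓn'
            have hx : ((ℓ : ℂ) + δ) ≠ 0 := by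
              rcases Nat.eq_zero_or_pos ℓ with h | h
              · subst h; simpa using hδ0
              · intro hcon
                have := congrArg Complex.re hcon
                simp only [Complex.add_re, Complex.natCast_re, Complex.zero_re] at this
                have hl1 : (1 : ℝ) ≤ (ℓ : ℝ) := by exact_mod_cast h
                linarith
            have hy : ((k : ℂ) - ℓ - δ) ≠ 0 := by
              intro hcon
              have := congrArg Complex.re hcon
              simp only [Complex.sub_re, Complex.natCast_re, Complex.zero_re] at this
              have hln : (ℓ : ℝ) ≤ (n : ℝ) := by exact_mod_cast hℓn'
              linarith
            have hz : ((ℓ : ℂ) + δ - (k : ℂ)) ≠ 0 := by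
              intro hcon
              have := congrArg Complex.re hcon
              simp only [Complex.sub_re, Complex.add_re, Complex.natCast_re,
                Complex.zero_re] at this
              have hln : (ℓ : ℝ) ≤ (n : ℝ) := by exact_mod_cast hℓn'
              linarith
            have e1 : Complex.Gamma ((↑(ℓ + 1) : ℂ) + δ)
                = ((ℓ : ℂ) + δ) * Complex.Gamma ((ℓ : ℂ) + δ) := by
              push_cast
              rw [show (ℓ : ℂ) + 1 + δ = ((ℓ : ℂ) + δ) + 1 from by ring]
              exact Complex.Gamma_add_one _ hx
            have e2 : Complex.Gamma ((k : ℂ) - (↑(ℓ + 1) : ℂ) + 1 - δ)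
                = Complex.Gamma ((k : ℂ) - ℓ - δ) := by
              push_cast
              congr 1
              ring
            have e3 : Complex.Gamma ((k : ℂ) - ℓ + 1 - δ)
                = ((k : ℂ) - ℓ - δ) * Complex.Gamma ((k : ℂ) - ℓ - δ) := by
              rw [show (k : ℂ) - ℓ + 1 - δ = ((k : ℂ) - ℓ - δ) + 1 from by ring]
              exact Complex.Gamma_add_one _ hy
            calc (-1 : ℂ) ^ (ℓ + 1) * Complex.Gamma ((↑(ℓ + 1) : ℂ) + δ)
                  * Complex.Gamma ((k : ℂ) - (↑(ℓ + 1) : ℂ) + 1 - δ)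
                = ((-1 : ℂ) ^ ℓ * Complex.Gamma ((ℓ : ℂ) + δ)
                    * Complex.Gamma ((k : ℂ) - ℓ + 1 - δ))
                  * (((ℓ : ℂ) + δ) / ((ℓ : ℂ) + δ - (k : ℂ))) := by
                  rw [e1, e2, e3]
                  field_simp
                  ring
              _ = (Complex.Gamma δ * Complex.Gamma ((k : ℂ) + 1 - δ)
                    * ∏ m ∈ Finset.range ℓ, (((m : ℂ) + δ) / ((m : ℂ) + δ - (k : ℂ))))
                  * (((ℓ : ℂ) + δ) / ((ℓ : ℂ) + δ - (k : ℂ))) := by rw [ihh]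
              _ = Complex.Gamma δ * Complex.Gamma ((k : ℂ) + 1 - δ)
                  * ∏ m ∈ Finset.range (ℓ + 1),
                      (((m : ℂ) + δ) / ((m : ℂ) + δ - (k : ℂ))) := by
                  rw [Finset.prod_range_succ]
                  ring
        have hsum : (∑ ℓ ∈ Finset.range (n + 1),
            ((-1 : ℂ) ^ ℓ * Complex.Gamma ((ℓ : ℂ) + δ)
              * Complex.Gamma ((k : ℂ) - ℓ + 1 - δ)) • dt ℓ)
            = (Complex.Gamma δ * Complex.Gamma ((k : ℂ) + 1 - δ)) • p k := by
          have hsum1 : (∑ ℓ ∈ Finset.range (n + 1),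
              ((-1 : ℂ) ^ ℓ * Complex.Gamma ((ℓ : ℂ) + δ)
                * Complex.Gamma ((k : ℂ) - ℓ + 1 - δ)) • dt ℓ)
              = ∑ ℓ ∈ Finset.range (n + 1),
                ((Complex.Gamma δ * Complex.Gamma ((k : ℂ) + 1 - δ)
                  * ∏ m ∈ Finset.range ℓ, (((m : ℂ) + δ) / ((m : ℂ) + δ - (k : ℂ)))) • dt ℓ) := by
            refine Finset.sum_congr rfl fun ℓ hℓ => ?_
            rw [key ℓ (by simpa [Nat.lt_succ_iff] using Finset.mem_range.mp hℓ)]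
          rw [hsum1, hp k]
          have hins : Finset.range (n + 1) = insert 0 (Finset.Icc 1 n) := by
            ext x; simp only [Finset.mem_range, Finset.mem_insert, Finset.mem_Icc]; omega
          rw [hins, Finset.sum_insert (by simp)]
          rw [smul_add]
          congr 1
          · simp [hdt0]
          · rw [Finset.smul_sum]
            refine Finset.sum_congr rfl fun ℓ hℓ => ?_
            rw [smul_smul, mul_assoc]
        rw [hWdef]
        simp only
        rw [hsum, smul_dotProduct, smul_dotProduct, hpϑ k]
        simp
      refine Tendsto.congr' ?_ tendsto_const_nhds
      filter_upwards [eventually_ge_atTop K₁] with k hk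
      exact (hev k hk).symm
  -- the remainder term
  have hexp : (0 : ℝ) < δ.re + m + 1 := by
    have : (0 : ℝ) ≤ (m : ℝ) := Nat.cast_nonneg m
    linarith
  have h0 : Tendsto (fun k : ℕ => (k : ℝ) ^ (-δ.re - (m : ℝ) - 1)) atTop (𝓝 0) := by
    have h1 : Tendsto (fun x : ℝ => x ^ (-(δ.re + (m : ℝ) + 1))) atTop (𝓝 0) :=
      tendsto_rpow_neg_atTop hexp
    have h2 := h1.comp tendsto_natCast_atTop_atTop (f := fun k : ℕ => (k : ℝ))
    refine h2.congr fun k => ?_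
    simp only [Function.comp_apply]
    congr 1
    ring
  have hr : Tendsto (fun k : ℕ => d k - (Θ • b₁ + W m k)) atTop (𝓝 0) :=
    (hd m).trans_tendsto h0
  have hri : ∀ i, Tendsto (fun k : ℕ => (d k - (Θ • b₁ + W m k)) i) atTop (𝓝 0) := by
    intro i
    have := tendsto_pi_nhds.mp hr i
    simpa using this
  have hrϑ : Tendsto (fun k => (d k - (Θ • b₁ + W m k)) ⬝ᵥ ϑ k) atTop (𝓝 0) := by
    have h1 : Tendsto (fun k => (d k - (Θ • b₁ + W m k)) 0 * ϑ k 0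
        + (d k - (Θ • b₁ + W m k)) 1 * ϑ k 1) atTop
        (𝓝 (0 * (cLim⁻¹ * b₂ 1) + 0 * (cLim⁻¹ * (-(b₂ 0))))) :=
      ((hri 0).mul hϑ0).add ((hri 1).mul hϑ1)
    simp only [zero_mul, add_zero] at h1
    exact h1.congr fun k => by simp [dotProduct, Fin.sum_univ_two, Matrix.vecHead, Matrix.vecTail]
  -- conclude convergence of Θseq
  have hconv : Tendsto Θseq atTop (𝓝 Θ) := by
    have hdec : ∀ k, Θseq k = Θ * (b₁ ⬝ᵥ ϑ k) + W m k ⬝ᵥ ϑ k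
        + (d k - (Θ • b₁ + W m k)) ⬝ᵥ ϑ k := by
      intro k
      rw [hΘseq k]
      have hdk : d k = (Θ • b₁ + W m k) + (d k - (Θ • b₁ + W m k)) := by abel
      conv_lhs => rw [hdk]
      rw [add_dotProduct, add_dotProduct, smul_dotProduct, smul_eq_mul]
    have h1 : Tendsto (fun k => Θ * (b₁ ⬝ᵥ ϑ k) + W m k ⬝ᵥ ϑ k
        + (d k - (Θ • b₁ + W m k)) ⬝ᵥ ϑ k) atTop (𝓝 (Θ * 1 + 0 + 0)) :=
      ((tendsto_const_nhds.mul hb₁ϑ).add hWϑ).add hrϑ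
    simp only [mul_one, add_zero] at h1
    exact h1.congr fun k => (hdec k).symm
  -- the modulus limit
  have hTpos : 0 < ‖τ‖ := norm_pos_iff.mpr hτ
  have hs : 1 < δ.re + (n : ℝ) + 2 := by
    have : (0 : ℝ) ≤ (n : ℝ) := Nat.cast_nonneg n
    linarith
  have hA : Tendsto (fun k : ℕ => (k : ℝ) ^ (δ.re + (n : ℝ) + 2)
      * ‖Θseq k - Θseq (k - 1)‖) atTop (𝓝 (‖τ‖)) := by
    have h1 : Tendsto (fun k : ℕ => ‖(k : ℂ) ^ (δ + (n : ℂ) + 2)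
        * (Θseq k - Θseq (k - 1))‖) atTop (𝓝 (‖τ‖)) :=
      hlim.norm
    refine h1.congr' ?_
    filter_upwards [eventually_ge_atTop 1] with k hk
    have hk0 : (0 : ℝ) < (k : ℝ) := by exact_mod_cast hk
    rw [norm_mul]
    congr 1
    have : ((k : ℕ) : ℂ) = (((k : ℕ) : ℝ) : ℂ) := by push_cast; rfl
    rw [this, Complex.norm_cpow_eq_rpow_re_of_pos hk0]
    simp [Complex.add_re]
  intro ε hε
  obtain ⟨k₂, hk₂⟩ := seq_bound Θ Θseq (δ.re + (n : ℝ) + 2) hs (‖τ‖) hTpos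
    hconv hA ε hε
  refine ⟨k₂, fun k hk => ?_⟩
  have := hk₂ k hk
  have hrw : δ.re + (n : ℝ) + 2 - 1 = δ.re + n + 1 := by ring
  rwa [hrw] at this
end

section
/- Let A₀, A₁ ∈ M₂(ℂ) be such that A₀ − k·I is invertible for every integer k ≥ 1, let (G_k)_{k≥0} be a sequence in M₂(ℂ) such that G(z) := Σ_{k≥0} z^k G_k converges on the unit disk 𝔇₀ = {z ∈ ℂ : |z| < 1}, and let η(z) = Σ_{k≥0} z^k d_k (with d_k ∈ ℂ²) be holomorphic on 𝔇₀ and satisfy η′(z) = (A₀/z + A₁/(z−1) + G(z)) η(z) for all z ∈ 𝔇₀ with z ≠ 0. Define u₀ := d₀ and recursively u_k := (A₀ − k)^{−1} ((A₁ + 1)·d_{k−1} − Σ_{ℓ=0}^{k−1} G_{k−1−ℓ} u_ℓ) and d′_k := d′_{k−1} + u_k for k ≥ 1, starting with d′₀ := d₀. Then d_k = d′_k for all k ≥ 0; equivalently, the differences u_k = d_k − d_{k−1} satisfy (A₀ − k)(d_k − d_{k−1}) = (A₁+1) d_{k−1} − Σ_{ℓ=0}^{k−1} G_{k−1−ℓ}(d_ℓ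 − d_{ℓ−1}) for every k ≥ 1, where d_{−1} := 0. -/
open Matrix
open scoped ENNReal NNReal

/-- shift a sequence by one, putting `0` in front -/
def sh {E : Type*} [Zero E] (c : ℕ → E) : ℕ → E
  | 0 => 0
  | k + 1 => c k

@[simp] lemma sh_zero {E : Type*} [Zero E] (c : ℕ → E) : sh c 0 = 0 := rfl
@[simp] lemma sh_succ {E : Type*} [Zero E] (c : ℕ → E) (k : ℕ) : sh c (k + 1) = c k := rfl

section Helpers

variable {E : Type*} [NormedAddCommGroup E] [NormedSpace ℂ E] [FiniteDimensional ℂ E]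

/-- The formal multilinear series with coefficients `c`. -/
noncomputable def seriesOf (c : ℕ → E) : FormalMultilinearSeries ℂ ℂ E :=
  fun n => ContinuousMultilinearMap.mkPiRing ℂ (Fin n) (c n)

theorem hasFPowerSeriesOnBall_of_hasSum (c : ℕ → E) (f : ℂ → E)
    (h : ∀ z : ℂ, ‖z‖ < 1 → HasSum (fun k : ℕ => z ^ k • c k) (f z)) :
    HasFPowerSeriesOnBall f (seriesOf c) 0 1 := by
  refine ⟨?_, zero_lt_one, ?_⟩
  · apply ENNReal.le_of_forall_nnreal_lt
    intro r hr
    apply FormalMultilinearSeries.le_radius_of_summable_norm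
    have hr1 : ‖((r : ℂ))‖ < 1 := by
      simpa using (by exact_mod_cast hr : (r : ℝ≥0∞) < 1)
    have hs := summable_norm_iff.mpr (h r hr1).summable
    have heq : (fun n : ℕ => ‖seriesOf c n‖ * (r : ℝ) ^ n)
        = fun n : ℕ => ‖((r : ℂ)) ^ n • c n‖ := by
      funext n
      simp [seriesOf, ContinuousMultilinearMap.norm_mkPiRing, norm_smul, norm_pow]
      ring
    rw [heq]
    exact hs
  · intro y hy
    have hy' : ‖y‖ < 1 := by
      simpa [← ofReal_norm, ENNReal.ofReal_lt_one] using hy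
    have := h y hy'
    simp only [zero_add]
    convert this using 2 with n
    simp [seriesOf]

theorem coeff_eq_zero_of_hasSum_zero (c : ℕ → E)
    (h : ∀ z : ℂ, ‖z‖ < 1 → HasSum (fun k : ℕ => z ^ k • c k) 0) :
    ∀ k, c k = 0 := by
  have h0 : HasFPowerSeriesOnBall (0 : ℂ → E) (seriesOf c) 0 1 :=
    hasFPowerSeriesOnBall_of_hasSum c 0 (by simpa using h)
  have hz := h0.hasFPowerSeriesAt.eq_zero
  intro k
  have h1 : seriesOf c k = 0 := by rw [hz]; rfl
  have h2 : (seriesOf c k) (fun _ => (1 : ℂ)) = 0 := by rw [h1]; rfl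
  simpa [seriesOf] using h2


theorem hasSum_sh {z : ℂ} {c : ℕ → E} {S : E}
    (h : HasSum (fun k : ℕ => z ^ k • c k) S) :
    HasSum (fun k : ℕ => z ^ k • sh c k) (z • S) := by
  have h1 : HasSum (fun k : ℕ => z ^ (k + 1) • sh c (k + 1)) (z • S) := by
    have := h.const_smul z
    convert this using 2 with k
    rw [sh_succ, pow_succ, mul_comm, mul_smul]
  have h2 := (hasSum_nat_add_iff (f := fun k : ℕ => z ^ k • sh c k) 1).mp h1
  simpa using h2


theorem hasSum_deriv (c : ℕ → E) (f : ℂ → E)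
    (h : ∀ z : ℂ, ‖z‖ < 1 → HasSum (fun k : ℕ => z ^ k • c k) (f z))
    (z : ℂ) (hz : ‖z‖ < 1) :
    HasSum (fun k : ℕ => z ^ k • (((k : ℂ) + 1) • c (k + 1))) (deriv f z) := by
  have hp := hasFPowerSeriesOnBall_of_hasSum c f h
  have hder := hp.fderiv
  have hmem : z ∈ EMetric.ball (0 : ℂ) 1 := by
    exact mem_eball_zero_iff.2 (by simpa [← ofReal_norm, ENNReal.ofReal_lt_one] using hz)
  have hs := hder.hasSum hmem
  have hs1 := hs.mapL (ContinuousLinearMap.apply ℂ E (1 : ℂ))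
  simp only [zero_add] at hs1
  have key : ∀ n : ℕ, ((seriesOf c).derivSeries n (fun _ => z)) (1 : ℂ)
      = z ^ n • (((n : ℂ) + 1) • c (n + 1)) := by
    intro n
    have e1 : (fun _ : Fin n => z) = fun i : Fin n => z • (fun _ : Fin n => (1:ℂ)) i := by
      funext i; simp
    rw [e1, ContinuousMultilinearMap.map_smul_univ]
    have e2 := (seriesOf c).derivSeries_apply_diag n (1 : ℂ)
    simp only [ContinuousLinearMap.smul_apply, Finset.prod_const, Finset.card_fin]
    rw [e2]
    simp only [seriesOf, ContinuousMultilinearMap.mkPiRing_apply, Finset.prod_const_one,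
      one_smul]
    rw [← Nat.cast_smul_eq_nsmul ℂ]
    push_cast
    ring_nf
  have h2 : HasSum (fun n : ℕ => z ^ n • (((n : ℂ) + 1) • c (n + 1))) (fderiv ℂ f z 1) := by
    convert hs1 using 1
    funext n
    exact (key n).symm
    rfl
  rw [fderiv_apply_one_eq_deriv] at h2
  exact h2


end Helpers

theorem sum_range_mul_reflect (f g : ℕ → ℂ) (n : ℕ) :
    ∑ k ∈ Finset.range (n + 1), f k * g (n - k)
      = ∑ k ∈ Finset.range (n + 1), f (n - k) * g k := by
  rw [← Finset.sum_range_reflect]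
  apply Finset.sum_congr rfl
  intro k hk
  have hk' : k ≤ n := Finset.mem_range_succ_iff.mp hk
  have h1 : n + 1 - 1 - k = n - k := by omega
  have h2 : n - (n - k) = k := Nat.sub_sub_self hk'
  rw [h1, h2]


theorem hasSum_cauchy (Gc : ℕ → Matrix (Fin 2) (Fin 2) ℂ) (d : ℕ → Fin 2 → ℂ)
    (z : ℂ) (Gz : Matrix (Fin 2) (Fin 2) ℂ) (ηz : Fin 2 → ℂ)
    (hGz : HasSum (fun k : ℕ => z ^ k • Gc k) Gz)
    (hdz : HasSum (fun k : ℕ => z ^ k • d k) ηz) :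
    HasSum (fun k : ℕ => z ^ k • ∑ ℓ ∈ Finset.range (k + 1), (Gc (k - ℓ)).mulVec (d ℓ))
      (Gz.mulVec ηz) := by
  have hGe : ∀ i j, HasSum (fun k : ℕ => z ^ k * Gc k i j) (Gz i j) := by
    intro i j
    have h1 := Pi.hasSum.mp hGz i
    have h2 := Pi.hasSum.mp h1 j
    simpa [Matrix.smul_apply, smul_eq_mul] using h2
  have hde : ∀ j, HasSum (fun k : ℕ => z ^ k * d k j) (ηz j) := by
    intro j
    simpa using Pi.hasSum.mp hdz j
  rw [Pi.hasSum]
  intro i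
  have hj : ∀ j, HasSum
      (fun n : ℕ => ∑ k ∈ Finset.range (n + 1), (z ^ k * Gc k i j) * (z ^ (n - k) * d (n - k) j))
      (Gz i j * ηz j) := by
    intro j
    have hf : Summable (fun k : ℕ => ‖z ^ k * Gc k i j‖) :=
      summable_norm_iff.mpr (hGe i j).summable
    have hg : Summable (fun k : ℕ => ‖z ^ k * d k j‖) :=
      summable_norm_iff.mpr (hde j).summable
    have := hasSum_sum_range_mul_of_summable_norm hf hg
    rwa [(hGe i j).tsum_eq, (hde j).tsum_eq] at this
  have hsum := (hj 0).add (hj 1)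
  convert hsum using 1
  · funext n
    have step : ∀ j, ∑ k ∈ Finset.range (n + 1), (z ^ k * Gc k i j) * (z ^ (n - k) * d (n - k) j)
        = z ^ n * ∑ ℓ ∈ Finset.range (n + 1), Gc (n - ℓ) i j * d ℓ j := by
      intro j
      have e1 : ∑ k ∈ Finset.range (n + 1), (z ^ k * Gc k i j) * (z ^ (n - k) * d (n - k) j)
          = ∑ k ∈ Finset.range (n + 1), (z ^ n * Gc k i j) * d (n - k) j := by
        apply Finset.sum_congr rfl
        intro k hk
        have hk' : k ≤ n := Finset.mem_range_succ_iff.mp hk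
        have hzz : z ^ k * z ^ (n - k) = z ^ n := by
          rw [← pow_add, Nat.add_sub_cancel' hk']
        rw [show z ^ k * Gc k i j * (z ^ (n - k) * d (n - k) j)
            = (z ^ k * z ^ (n - k)) * Gc k i j * d (n - k) j from by ring, hzz]
      rw [e1, sum_range_mul_reflect (fun k => z ^ n * Gc k i j) (fun k => d k j) n,
        Finset.mul_sum]
      apply Finset.sum_congr rfl
      intro k _
      ring
    rw [step 0, step 1]
    simp only [Pi.smul_apply, Finset.sum_apply, smul_eq_mul, Matrix.mulVec, dotProduct,
      Fin.sum_univ_two]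
    rw [Finset.sum_add_distrib, mul_add, Finset.mul_sum, Finset.mul_sum]
  · simp [Matrix.mulVec, dotProduct, Fin.sum_univ_two]


section MatrixNorm

attribute [local instance] Matrix.normedAddCommGroup Matrix.normedSpace

noncomputable def mulVecCLM (A : Matrix (Fin 2) (Fin 2) ℂ) : (Fin 2 → ℂ) →L[ℂ] (Fin 2 → ℂ) :=
  LinearMap.toContinuousLinearMap A.mulVecLin

@[simp] lemma mulVecCLM_apply (A : Matrix (Fin 2) (Fin 2) ℂ) (v : Fin 2 → ℂ) :
    mulVecCLM A v = A.mulVec v := by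
  simp [mulVecCLM]

/-- coefficients of the derivative series -/
noncomputable def Dc (d : ℕ → Fin 2 → ℂ) : ℕ → Fin 2 → ℂ := fun n => ((n : ℂ) + 1) • d (n + 1)

/-- Cauchy product coefficients of `G·η` -/
noncomputable def cpC (Gc : ℕ → Matrix (Fin 2) (Fin 2) ℂ) (d : ℕ → Fin 2 → ℂ) :
    ℕ → Fin 2 → ℂ := fun k => ∑ ℓ ∈ Finset.range (k + 1), (Gc (k - ℓ)).mulVec (d ℓ)

/-- Taylor coefficients of `z(z-1)η' - ((z-1)A₀ + zA₁ + z(z-1)G)η`. -/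
noncomputable def acoef (A₀ A₁ : Matrix (Fin 2) (Fin 2) ℂ) (Gc : ℕ → Matrix (Fin 2) (Fin 2) ℂ)
    (d : ℕ → Fin 2 → ℂ) : ℕ → Fin 2 → ℂ := fun k =>
  sh (sh (Dc d)) k - sh (Dc d) k
    - (sh (fun n => A₀.mulVec (d n)) k - A₀.mulVec (d k))
    - sh (fun n => A₁.mulVec (d n)) k
    - (sh (sh (cpC Gc d)) k - sh (cpC Gc d) k)

noncomputable def Vf (A₀ A₁ : Matrix (Fin 2) (Fin 2) ℂ) (G : ℂ → Matrix (Fin 2) (Fin 2) ℂ)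
    (η : ℂ → Fin 2 → ℂ) : ℂ → Fin 2 → ℂ := fun z =>
  z • z • deriv η z - z • deriv η z
    - (z • A₀.mulVec (η z) - A₀.mulVec (η z))
    - z • A₁.mulVec (η z)
    - (z • z • (G z).mulVec (η z) - z • (G z).mulVec (η z))

theorem acoef_eq_zero
    (A₀ A₁ : Matrix (Fin 2) (Fin 2) ℂ)
    (Gc : ℕ → Matrix (Fin 2) (Fin 2) ℂ)
    (G : ℂ → Matrix (Fin 2) (Fin 2) ℂ)
    (hG : ∀ z : ℂ, ‖z‖ < 1 → HasSum (fun k : ℕ => z ^ k • Gc k) (G z))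
    (η : ℂ → Fin 2 → ℂ) (d : ℕ → Fin 2 → ℂ)
    (hη : ∀ z : ℂ, ‖z‖ < 1 → HasSum (fun k : ℕ => z ^ k • d k) (η z))
    (hode : ∀ z : ℂ, ‖z‖ < 1 → z ≠ 0 →
      HasDerivAt η ((z⁻¹ • A₀ + (z - 1)⁻¹ • A₁ + G z).mulVec (η z)) z) :
    ∀ k, acoef A₀ A₁ Gc d k = 0 := by
  have hpη := hasFPowerSeriesOnBall_of_hasSum d η hη
  have hpG := hasFPowerSeriesOnBall_of_hasSum Gc G hG
  -- the function Vf vanishes off 0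
  have hVz : ∀ z : ℂ, ‖z‖ < 1 → z ≠ 0 → Vf A₀ A₁ G η z = 0 := by
    intro z hz hz0
    have hz1 : z - 1 ≠ 0 := by
      intro h
      have : z = 1 := by linear_combination h
      rw [this] at hz; simp at hz
    have hd := (hode z hz hz0).deriv
    simp only [Vf, hd, Matrix.add_mulVec, Matrix.smul_mulVec]
    match_scalars <;> field_simp <;> ring
  -- continuity of Vf at 0
  have hcη : ContinuousAt η 0 := hpη.hasFPowerSeriesAt.continuousAt
  have hcG : ContinuousAt G 0 := hpG.hasFPowerSeriesAt.continuousAt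
  have hcD : ContinuousAt (deriv η) 0 := by
    have hfc : ContinuousAt (fderiv ℂ η) 0 := hpη.fderiv.hasFPowerSeriesAt.continuousAt
    have h1 : ContinuousAt (fun z => fderiv ℂ η z 1) 0 :=
      ((ContinuousLinearMap.apply ℂ (Fin 2 → ℂ) (1 : ℂ)).continuous.continuousAt).comp hfc
    have h2 : (fun z => fderiv ℂ η z 1) = deriv η := funext fun z => fderiv_apply_one_eq_deriv
    rwa [h2] at h1
  have hmv : ContinuousAt (fun z => (G z).mulVec (η z)) 0 := by
    apply continuousAt_pi.mpr
    intro i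
    have he : (fun z => (G z).mulVec (η z) i) = fun z => G z i 0 * η z 0 + G z i 1 * η z 1 := by
      funext z; simp [Matrix.mulVec, dotProduct, Fin.sum_univ_two]
    rw [he]
    have hGij : ∀ j, ContinuousAt (fun z => G z i j) 0 := by
      intro j
      exact (continuousAt_pi.mp (continuousAt_pi.mp hcG i) j)
    have hηj : ∀ j, ContinuousAt (fun z => η z j) 0 := fun j => continuousAt_pi.mp hcη j
    exact ((hGij 0).mul (hηj 0)).add ((hGij 1).mul (hηj 1))
  have hA0c : ContinuousAt (fun z => A₀.mulVec (η z)) 0 := by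
    have := ((mulVecCLM A₀).continuous.continuousAt).comp hcη
    simpa [Function.comp_def] using this
  have hA1c : ContinuousAt (fun z => A₁.mulVec (η z)) 0 := by
    have := ((mulVecCLM A₁).continuous.continuousAt).comp hcη
    simpa [Function.comp_def] using this
  have hVcont : ContinuousAt (Vf A₀ A₁ G η) 0 := by
    unfold Vf
    exact ((((continuousAt_id.smul (continuousAt_id.smul hcD)).sub
        (continuousAt_id.smul hcD)).sub
        ((continuousAt_id.smul hA0c).sub hA0c)).sub
        (continuousAt_id.smul hA1c)).sub
        ((continuousAt_id.smul (continuousAt_id.smul hmv)).sub (continuousAt_id.smul hmv))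
  -- value at 0
  have key0 : A₀.mulVec (η 0) = 0 := by
    have hb : ∀ᶠ z : ℂ in nhds 0, ‖z‖ < 1 := by
      have := Metric.ball_mem_nhds (0 : ℂ) one_pos
      filter_upwards [this] with z hz
      simpa [Metric.mem_ball, dist_zero_right] using hz
    have hev : ∀ᶠ z in nhdsWithin (0 : ℂ) {(0 : ℂ)}ᶜ, Vf A₀ A₁ G η z = 0 := by
      filter_upwards [eventually_nhdsWithin_of_eventually_nhds hb, self_mem_nhdsWithin]
        with z h1 h2
      exact hVz z h1 h2
    have hlim1 : Filter.Tendsto (Vf A₀ A₁ G η) (nhdsWithin (0 : ℂ) {(0 : ℂ)}ᶜ)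
        (nhds (Vf A₀ A₁ G η 0)) := hVcont.continuousWithinAt.tendsto
    have hlim2 : Filter.Tendsto (Vf A₀ A₁ G η) (nhdsWithin (0 : ℂ) {(0 : ℂ)}ᶜ)
        (nhds 0) := Filter.Tendsto.congr' (Filter.EventuallyEq.symm hev) tendsto_const_nhds
    have h0 := tendsto_nhds_unique hlim1 hlim2
    have : Vf A₀ A₁ G η 0 = A₀.mulVec (η 0) := by
      simp [Vf]
    rw [this] at h0
    exact h0
  -- coefficients vanish
  apply coeff_eq_zero_of_hasSum_zero
  intro z hz
  have hηz := hη z hz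
  have hGz := hG z hz
  have hD : HasSum (fun k : ℕ => z ^ k • Dc d k) (deriv η z) := by
    simpa [Dc] using hasSum_deriv d η hη z hz
  have hC : HasSum (fun k : ℕ => z ^ k • cpC Gc d k) ((G z).mulVec (η z)) := by
    simpa [cpC] using hasSum_cauchy Gc d z (G z) (η z) hGz hηz
  have hA0 : HasSum (fun k : ℕ => z ^ k • A₀.mulVec (d k)) (A₀.mulVec (η z)) := by
    have := hηz.mapL (mulVecCLM A₀)
    simpa [_root_.map_smul] using this
  have hA1 : HasSum (fun k : ℕ => z ^ k • A₁.mulVec (d k)) (A₁.mulVec (η z)) := by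
    have := hηz.mapL (mulVecCLM A₁)
    simpa [_root_.map_smul] using this
  have T1 := hasSum_sh (hasSum_sh hD)
  have T2 := hasSum_sh hD
  have T3 := hasSum_sh hA0
  have T5 := hasSum_sh hA1
  have T6 := hasSum_sh (hasSum_sh hC)
  have T7 := hasSum_sh hC
  have total := ((((T1.sub T2).sub (T3.sub hA0)).sub T5).sub (T6.sub T7))
  have htot : HasSum (fun k : ℕ => z ^ k • acoef A₀ A₁ Gc d k) (Vf A₀ A₁ G η z) := by
    convert total using 1
    any_goals exact rfl
    funext k
    simp only [acoef, smul_sub]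
  have hV0 : Vf A₀ A₁ G η z = 0 := by
    by_cases hz0 : z = 0
    · subst hz0
      simp [Vf, key0]
    · exact hVz z hz hz0
  rwa [hV0] at htot


lemma sh_Dc (d : ℕ → Fin 2 → ℂ) (m : ℕ) : sh (Dc d) m = (m : ℂ) • d m := by
  cases m with
  | zero => simp
  | succ n => simp [Dc]

lemma sh_cpC (Gc : ℕ → Matrix (Fin 2) (Fin 2) ℂ) (d : ℕ → Fin 2 → ℂ) (m : ℕ) :
    sh (cpC Gc d) m = ∑ ℓ ∈ Finset.range m, (Gc (m - 1 - ℓ)).mulVec (d ℓ) := by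
  cases m with
  | zero => simp
  | succ n =>
    rw [sh_succ]
    apply Finset.sum_congr rfl
    intro ℓ _
    congr 1

theorem final_step
    (A₀ A₁ : Matrix (Fin 2) (Fin 2) ℂ)
    (Gc : ℕ → Matrix (Fin 2) (Fin 2) ℂ)
    (d : ℕ → Fin 2 → ℂ)
    (ha : ∀ k, acoef A₀ A₁ Gc d k = 0)
    (u : ℕ → Fin 2 → ℂ)
    (hu : ∀ ℓ : ℕ, u ℓ = if ℓ = 0 then d 0 else d ℓ - d (ℓ - 1)) :
    ∀ k : ℕ, 1 ≤ k →
      (A₀ - (k : ℂ) • (1 : Matrix (Fin 2) (Fin 2) ℂ)).mulVec (u k) =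
        (A₁ + (1 : Matrix (Fin 2) (Fin 2) ℂ)).mulVec (d (k - 1))
          - ∑ ℓ ∈ Finset.range k, (Gc (k - 1 - ℓ)).mulVec (u ℓ) := by
  intro k hk
  obtain ⟨m, rfl⟩ : ∃ m, k = m + 1 := ⟨k - 1, by omega⟩
  -- the sum over u
  have hU : ∑ ℓ ∈ Finset.range (m + 1), (Gc (m + 1 - 1 - ℓ)).mulVec (u ℓ)
      = cpC Gc d m - ∑ ℓ ∈ Finset.range m, (Gc (m - 1 - ℓ)).mulVec (d ℓ) := by
    have e0 : ∀ ℓ, (Gc (m + 1 - 1 - ℓ)) = Gc (m - ℓ) := by intro ℓ; congr 1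
    have split := Finset.sum_range_succ' (fun ℓ => (Gc (m - ℓ)).mulVec (u ℓ)) m
    calc ∑ ℓ ∈ Finset.range (m + 1), (Gc (m + 1 - 1 - ℓ)).mulVec (u ℓ)
        = ∑ ℓ ∈ Finset.range (m + 1), (Gc (m - ℓ)).mulVec (u ℓ) := by
          apply Finset.sum_congr rfl; intro ℓ _; rw [e0]
      _ = (∑ i ∈ Finset.range m, (Gc (m - (i + 1))).mulVec (u (i + 1)))
            + (Gc (m - 0)).mulVec (u 0) := split
      _ = (∑ i ∈ Finset.range m, ((Gc (m - 1 - i)).mulVec (d (i + 1))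
              - (Gc (m - 1 - i)).mulVec (d i)))
            + (Gc m).mulVec (d 0) := by
          congr 1
          · apply Finset.sum_congr rfl
            intro i _
            rw [hu (i + 1)]
            simp only [Nat.add_sub_cancel, if_neg (Nat.succ_ne_zero i)]
            rw [show m - (i + 1) = m - 1 - i from by omega, Matrix.mulVec_sub]
          · rw [hu 0]; simp
      _ = cpC Gc d m - ∑ ℓ ∈ Finset.range m, (Gc (m - 1 - ℓ)).mulVec (d ℓ) := by
          rw [Finset.sum_sub_distrib]
          have : cpC Gc d m = (∑ i ∈ Finset.range m, (Gc (m - 1 - i)).mulVec (d (i + 1)))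
              + (Gc m).mulVec (d 0) := by
            rw [cpC, Finset.sum_range_succ' (fun ℓ => (Gc (m - ℓ)).mulVec (d ℓ)) m]
            have e2 : ∀ i ∈ Finset.range m, (Gc (m - (i + 1))).mulVec (d (i + 1))
                = (Gc (m - 1 - i)).mulVec (d (i + 1)) := fun i _ => by
              rw [show m - (i + 1) = m - 1 - i from by omega]
            rw [Finset.sum_congr rfl e2]
            simp
          rw [this]; abel
  -- the vanishing coefficient
  have ha1 := ha (m + 1)
  simp only [acoef, sh_succ, sh_Dc, sh_cpC, Dc] at ha1
  -- rewrite u (m+1)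
  rw [hu (m + 1)] at *
  simp only [Nat.add_sub_cancel, if_neg (Nat.succ_ne_zero m)] at *
  rw [hU]
  simp only [Matrix.sub_mulVec, Matrix.add_mulVec, Matrix.smul_mulVec,
    Matrix.one_mulVec, Matrix.mulVec_sub]
  push_cast
  linear_combination (norm := module) ha1

end MatrixNorm

/-- Lemma 1 of the paper (two-step recurrence formula): the Taylor coefficients `d_k` of a
holomorphic solution `η(z) = Σ z^k d_k` of `η′ = (A₀/z + A₁/(z−1) + G(z)) η` on the unit
disk satisfy, with `u_k := d_k − d_{k−1}` (and `u₀ := d₀`, `d_{−1} := 0`),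
`(A₀ − k) u_k = (A₁+1) d_{k−1} − Σ_{ℓ=0}^{k−1} G_{k−1−ℓ} u_ℓ` for every `k ≥ 1`;
equivalently, `d_k` can be computed from `d₀` by the two-step recurrence of the lemma. -/
theorem coefficient_recurrence
    (A₀ A₁ : Matrix (Fin 2) (Fin 2) ℂ)
    (hinv : ∀ k : ℕ, 1 ≤ k →
      IsUnit (A₀ - (k : ℂ) • (1 : Matrix (Fin 2) (Fin 2) ℂ)))
    (Gc : ℕ → Matrix (Fin 2) (Fin 2) ℂ)
    (G : ℂ → Matrix (Fin 2) (Fin 2) ℂ)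
    (hG : ∀ z : ℂ, ‖z‖ < 1 → HasSum (fun k : ℕ => z ^ k • Gc k) (G z))
    (η : ℂ → Fin 2 → ℂ) (d : ℕ → Fin 2 → ℂ)
    (hη : ∀ z : ℂ, ‖z‖ < 1 → HasSum (fun k : ℕ => z ^ k • d k) (η z))
    (hode : ∀ z : ℂ, ‖z‖ < 1 → z ≠ 0 →
      HasDerivAt η ((z⁻¹ • A₀ + (z - 1)⁻¹ • A₁ + G z).mulVec (η z)) z)
    (u : ℕ → Fin 2 → ℂ)
    (hu : ∀ ℓ : ℕ, u ℓ = if ℓ = 0 then d 0 else d ℓ - d (ℓ - 1)) :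
    ∀ k : ℕ, 1 ≤ k →
      (A₀ - (k : ℂ) • (1 : Matrix (Fin 2) (Fin 2) ℂ)).mulVec (u k) =
        (A₁ + (1 : Matrix (Fin 2) (Fin 2) ℂ)).mulVec (d (k - 1))
          - ∑ ℓ ∈ Finset.range k, (Gc (k - 1 - ℓ)).mulVec (u ℓ) := by
  exact final_step A₀ A₁ Gc d (acoef_eq_zero A₀ A₁ Gc G hG η d hη hode) u hu
end

section
/- Let (a_k)_{k≥1} be a sequence of complex numbers, let s ∈ ℂ with Re(s) > 1, and let τ ∈ ℂ with τ ≠ 0. Suppose k^s (a_k − a_{k−1}) → τ as k → ∞. Then the limit a := lim_{k→∞} a_k exists, and for every ε > 0 there exists an integer k₂ such that |a − a_k| ≤ (1+ε) · k · |a_k − a_{k−1}| / (Re(s) − 1) for all integers k ≥ k₂. -/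
open Filter Topology Finset

private lemma tail_step {σ : ℝ} (hσ : 1 < σ) {x : ℝ} (hx : 1 ≤ x) :
    (σ - 1) * (x + 1) ^ (-σ) ≤ x ^ (1 - σ) - (x + 1) ^ (1 - σ) := by
  have hx0 : (0:ℝ) < x := lt_of_lt_of_le one_pos hx
  obtain ⟨c, hc, hceq⟩ := exists_hasDerivAt_eq_slope (fun t : ℝ => t ^ (1 - σ))
      (fun t : ℝ => (1 - σ) * t ^ (-σ)) (by linarith : x < x + 1)
      (fun t ht => (Real.continuousAt_rpow_const t (1 - σ)
        (Or.inl (ne_of_gt (lt_of_lt_of_le hx0 ht.1)))).continuousWithinAt)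
      (fun t ht => by
        have h := Real.hasDerivAt_rpow_const (p := 1 - σ)
          (Or.inl (ne_of_gt (lt_trans hx0 ht.1)) : t ≠ 0 ∨ 1 ≤ 1 - σ)
        simpa [show (1 - σ) - 1 = -σ by ring] using h)
  have hc0 : 0 < c := lt_trans hx0 hc.1
  rw [show x + 1 - x = 1 by ring, div_one] at hceq
  have h1 : x ^ (1 - σ) - (x + 1) ^ (1 - σ) = (σ - 1) * c ^ (-σ) := by nlinarith [hceq]
  rw [h1]
  have : (x + 1) ^ (-σ) ≤ c ^ (-σ) :=
    Real.rpow_le_rpow_of_nonpos hc0 hc.2.le (by linarith)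
  exact mul_le_mul_of_nonneg_left this (by linarith)

private lemma tail_sum {σ : ℝ} (hσ : 1 < σ) {k : ℕ} (hk : 1 ≤ k) :
    ∑' i : ℕ, ((i + k + 1 : ℕ) : ℝ) ^ (-σ) ≤ (k : ℝ) ^ (1 - σ) / (σ - 1) := by
  have hσ0 : (0:ℝ) < σ - 1 := by linarith
  have hk1 : (1:ℝ) ≤ (k:ℝ) := by exact_mod_cast hk
  set f : ℕ → ℝ := fun i => ((k:ℝ) + i) ^ (1 - σ) with hf
  have key : ∀ i : ℕ, ((i + k + 1 : ℕ) : ℝ) ^ (-σ) ≤ (f i - f (i + 1)) / (σ - 1) := by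
    intro i
    rw [le_div_iff₀ hσ0]
    have hx : (1:ℝ) ≤ (k:ℝ) + i := le_add_of_le_of_nonneg hk1 (Nat.cast_nonneg i)
    have h := tail_step hσ hx
    have hc1 : ((i + k + 1 : ℕ) : ℝ) = (k:ℝ) + i + 1 := by push_cast; ring
    have hc2 : f (i + 1) = ((k:ℝ) + i + 1) ^ (1 - σ) := by
      simp only [hf]; push_cast; ring_nf
    rw [hc1, hc2, hf]
    nlinarith [h]
  apply Real.tsum_le_of_sum_range_le (fun n => Real.rpow_nonneg (Nat.cast_nonneg _) _)
  intro n
  calc ∑ i ∈ range n, ((i + k + 1 : ℕ) : ℝ) ^ (-σ)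
      ≤ ∑ i ∈ range n, (f i - f (i + 1)) / (σ - 1) :=
        Finset.sum_le_sum fun i _ => key i
    _ = (f 0 - f n) / (σ - 1) := by
        rw [← Finset.sum_div, Finset.sum_range_sub' f]
    _ ≤ f 0 / (σ - 1) := by
        have hfn : 0 ≤ f n := Real.rpow_nonneg (by positivity) _
        apply div_le_div_of_nonneg_right ?_ ?_ <;> linarith
    _ = (k : ℝ) ^ (1 - σ) / (σ - 1) := by simp [hf]

set_option maxHeartbeats 1000000 in
/-- The general a posteriori error estimate extracted from the proof of Theorem 4 of the
paper: if `k^s (a_k − a_{k−1}) → τ ≠ 0` with `Re(s) > 1`, then `a_k` converges to some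
limit `a`, and for every `ε > 0` eventually
`|a − a_k| ≤ (1+ε)·k·|a_k − a_{k−1}|/(Re(s) − 1)`. -/
theorem a_posteriori_estimate
    (a : ℕ → ℂ) (s : ℂ) (hs : 1 < s.re) (τ : ℂ) (hτ : τ ≠ 0)
    (hlim : Tendsto (fun k : ℕ => (k : ℂ) ^ s * (a k - a (k - 1))) atTop (𝓝 τ)) :
    ∃ L : ℂ, Tendsto a atTop (𝓝 L) ∧
      ∀ ε : ℝ, 0 < ε → ∃ k₂ : ℕ, ∀ k ≥ k₂,
        ‖L - a k‖ ≤
          (1 + ε) * (k : ℝ) * ‖a k - a (k - 1)‖ / (s.re - 1) := by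
  set σ := s.re with hσdef
  set T := ‖τ‖ with hTdef
  have hT : 0 < T := by simpa [hTdef] using hτ
  set g : ℕ → ℝ := fun k => ‖a k - a (k - 1)‖ with hg
  -- Step A : `k^σ * g k → T`
  have habs : Tendsto (fun k : ℕ => (k : ℝ) ^ σ * g k) atTop (𝓝 T) := by
    have h1 : Tendsto (fun k : ℕ => ‖(k : ℂ) ^ s * (a k - a (k - 1))‖)
        atTop (𝓝 T) := (continuous_norm.tendsto τ).comp hlim
    refine h1.congr' ?_
    filter_upwards [eventually_ge_atTop 1] with k hk
    have hk0 : (0 : ℝ) < (k : ℝ) := by exact_mod_cast hk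
    rw [norm_mul]
    congr 1
    rw [show ((k : ℕ) : ℂ) = (((k : ℕ) : ℝ) : ℂ) by push_cast; rfl,
      Complex.norm_cpow_eq_rpow_re_of_pos hk0]
  -- a helper for converting bounds
  have hdiv : ∀ (C : ℝ) (k : ℕ), 1 ≤ k → (k : ℝ) ^ σ * g k ≤ C → g k ≤ C * (k : ℝ) ^ (-σ) := by
    intro C k hk h
    have hk0 : (0 : ℝ) < (k : ℝ) := by exact_mod_cast hk
    have hp : (0 : ℝ) < (k : ℝ) ^ σ := Real.rpow_pos_of_pos hk0 σ
    rw [Real.rpow_neg hk0.le, ← div_eq_mul_inv, le_div_iff₀ hp]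
    nlinarith [h]
  have hdiv' : ∀ (C : ℝ) (k : ℕ), 1 ≤ k → C ≤ (k : ℝ) ^ σ * g k → C * (k : ℝ) ^ (-σ) ≤ g k := by
    intro C k hk h
    have hk0 : (0 : ℝ) < (k : ℝ) := by exact_mod_cast hk
    have hp : (0 : ℝ) < (k : ℝ) ^ σ := Real.rpow_pos_of_pos hk0 σ
    rw [Real.rpow_neg hk0.le, ← div_eq_mul_inv, div_le_iff₀ hp]
    nlinarith [h]
  -- Step B : summability
  have hrpow : Summable (fun n : ℕ => (n : ℝ) ^ (-σ)) :=
    Real.summable_nat_rpow.mpr (by linarith)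
  have hub : ∀ᶠ k in atTop, g k ≤ (2 * T) * (k : ℝ) ^ (-σ) := by
    filter_upwards [habs.eventually_lt_const (by linarith : T < 2 * T),
      eventually_ge_atTop 1] with k h1 h2
    exact hdiv (2 * T) k h2 h1.le
  obtain ⟨N, hN⟩ := eventually_atTop.mp hub
  have hsumg : Summable (fun i : ℕ => g (i + 1)) := by
    rw [← summable_nat_add_iff N]
    apply Summable.of_nonneg_of_le (fun i => norm_nonneg _)
      (fun i => hN (i + N + 1) (by omega))
    have : Summable (fun i : ℕ => ((i + (N + 1) : ℕ) : ℝ) ^ (-σ)) :=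
      (summable_nat_add_iff (N + 1)).mpr hrpow
    simpa [show ∀ i : ℕ, i + N + 1 = i + (N + 1) by omega] using this.mul_left (2 * T)
  have hsumd : Summable (fun i : ℕ => a (i + 1) - a i) := by
    apply Summable.of_norm
    simpa [hg] using hsumg
  -- Step C : convergence
  have hA : ∀ n : ℕ, a n = a 0 + ∑ i ∈ range n, (a (i + 1) - a i) := by
    intro n; rw [Finset.sum_range_sub]; ring
  refine ⟨a 0 + ∑' i : ℕ, (a (i + 1) - a i), ?_, ?_⟩
  · have := hsumd.hasSum.tendsto_sum_nat
    have h2 := (tendsto_const_nhds (x := a 0) (f := atTop)).add this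
    exact h2.congr fun n => (hA n).symm
  -- Step D : error estimate
  intro ε hε
  set η := ε * T / (2 + ε) with hηdef
  have hη : 0 < η := by positivity
  have hTη : 0 < T - η := by
    rw [hηdef, sub_pos, div_lt_iff₀ (by linarith)]
    nlinarith
  have hTη2 : T + η = (1 + ε) * (T - η) := by
    rw [hηdef]; field_simp [show (2 + ε) ≠ 0 by linarith]; ring
  obtain ⟨N₁, hN₁⟩ := eventually_atTop.mp (habs.eventually (Metric.ball_mem_nhds T hη))
  refine ⟨max N₁ 1, fun k hk => ?_⟩
  have hk1 : 1 ≤ k := le_trans (le_max_right _ _) hk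
  have hkN : N₁ ≤ k := le_trans (le_max_left _ _) hk
  have hk0 : (0 : ℝ) < (k : ℝ) := by exact_mod_cast hk1
  -- bounds on g in terms of η
  have hband : ∀ j : ℕ, N₁ ≤ j → |(j : ℝ) ^ σ * g j - T| < η := fun j hj => by
    simpa [Real.dist_eq] using hN₁ j hj
  have hlow : (T - η) * (k : ℝ) ^ (-σ) ≤ g k := by
    apply hdiv' _ _ hk1
    have := hband k hkN
    rw [abs_lt] at this; linarith [this.1]
  have hup : ∀ i : ℕ, g (i + k + 1) ≤ (T + η) * ((i + k + 1 : ℕ) : ℝ) ^ (-σ) := by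
    intro i
    apply hdiv _ _ (by omega)
    have := hband (i + k + 1) (by omega)
    rw [abs_lt] at this; linarith [this.2]
  -- the tail identity
  have htail : (a 0 + ∑' i : ℕ, (a (i + 1) - a i)) - a k
      = ∑' i : ℕ, (a (i + k + 1) - a (i + k)) := by
    have := Summable.sum_add_tsum_nat_add (f := fun i : ℕ => a (i + 1) - a i) k hsumd
    rw [hA k]
    have he : (fun i : ℕ => a ((i + k) + 1) - a (i + k)) = fun i => a (i + k + 1) - a (i + k) := rfl
    rw [← this]
    abel
  have hsumtail : Summable (fun i : ℕ => g (i + k + 1)) := by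
    have := (summable_nat_add_iff k).mpr hsumg
    simpa [show ∀ i : ℕ, i + 1 + k = i + k + 1 by omega] using this
  have hnorm : ‖(a 0 + ∑' i : ℕ, (a (i + 1) - a i)) - a k‖
      ≤ ∑' i : ℕ, g (i + k + 1) := by
    rw [htail]
    have := norm_tsum_le_tsum_norm (f := fun i : ℕ => a (i + k + 1) - a (i + k))
      (by simpa [hg] using hsumtail)
    simpa [hg] using this
  have hsummaj : Summable (fun i : ℕ => (T + η) * ((i + k + 1 : ℕ) : ℝ) ^ (-σ)) := by
    have : Summable (fun i : ℕ => ((i + (k + 1) : ℕ) : ℝ) ^ (-σ)) :=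
      (summable_nat_add_iff (k + 1)).mpr hrpow
    simpa [show ∀ i : ℕ, i + k + 1 = i + (k + 1) by omega] using this.mul_left (T + η)
  have hchain : ∑' i : ℕ, g (i + k + 1) ≤ (T + η) * ((k : ℝ) ^ (1 - σ) / (σ - 1)) := by
    calc ∑' i : ℕ, g (i + k + 1)
        ≤ ∑' i : ℕ, (T + η) * ((i + k + 1 : ℕ) : ℝ) ^ (-σ) :=
          Summable.tsum_le_tsum hup hsumtail hsummaj
      _ = (T + η) * ∑' i : ℕ, ((i + k + 1 : ℕ) : ℝ) ^ (-σ) := tsum_mul_left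
      _ ≤ (T + η) * ((k : ℝ) ^ (1 - σ) / (σ - 1)) := by
          apply mul_le_mul_of_nonneg_left (tail_sum hs hk1) (by linarith)
  -- put everything together
  have hkey : (T - η) * (k : ℝ) ^ (1 - σ) ≤ (k : ℝ) * g k := by
    rw [show (1 : ℝ) - σ = 1 + (-σ) by ring, Real.rpow_add hk0, Real.rpow_one]
    calc (T - η) * ((k : ℝ) * (k : ℝ) ^ (-σ))
        = (k : ℝ) * ((T - η) * (k : ℝ) ^ (-σ)) := by ring
      _ ≤ (k : ℝ) * g k := mul_le_mul_of_nonneg_left hlow hk0.le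
  have hσ1 : (0 : ℝ) < σ - 1 := by linarith
  calc ‖(a 0 + ∑' i : ℕ, (a (i + 1) - a i)) - a k‖
      ≤ (T + η) * ((k : ℝ) ^ (1 - σ) / (σ - 1)) := le_trans hnorm hchain
    _ = (1 + ε) * ((T - η) * (k : ℝ) ^ (1 - σ)) / (σ - 1) := by rw [hTη2]; ring
    _ ≤ (1 + ε) * ((k : ℝ) * g k) / (σ - 1) := by
        exact div_le_div_of_nonneg_right
          (mul_le_mul_of_nonneg_left hkey (by linarith)) hσ1.le
    _ = (1 + ε) * (k : ℝ) * g k / (σ - 1) := by ring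
end

section
/- Let c, λ, μ, γ ∈ ℂ with c ∉ {0,1}, set a₁₂ := λ, b₁₂ := c(λ+μ+γ)/(1−c), r₁₂ := (λ+cμ+c²γ)/(c−1), and define A := [[−1/2, a₁₂],[0,0]], B := [[−1/2, b₁₂],[0,0]], R := [[−1/2, r₁₂],[0,0]], S := [[0,0],[1,0]]. Let U ⊆ ℂ \ {0,1,c} be open and let w : U → ℂ be twice differentiable with z(z−1)(z−c) w″(z) + (1/2)(3z² − 2(1+c)z + c) w′(z) + (λ + μz + γz²) w(z) = 0 for all z ∈ U. Then y : U → ℂ² defined by y(z) := (−c·w′(z), w(z)) satisfies y′(z) = (A/z + B/(z−1) + R/(z−c) − S/c) y(z) for all z ∈ U. -/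
open Matrix

/-- Forward direction of the correspondence (3.2)–(3.3) of the paper: a solution `w` of the
angular ellipsoidal wave equation in algebraic form gives a solution
`y = (−c w′, w)` of the associated 2×2 first-order system. -/
theorem ellipsoidal_to_system
    (c lam mu gam : ℂ) (hc0 : c ≠ 0) (hc1 : c ≠ 1)
    (a12 b12 r12 : ℂ)
    (ha12 : a12 = lam)
    (hb12 : b12 = c * (lam + mu + gam) / (1 - c))
    (hr12 : r12 = (lam + c * mu + c ^ 2 * gam) / (c - 1))
    (A B R S : Matrix (Fin 2) (Fin 2) ℂ)
    (hA : A = !![-1 / 2, a12; 0, 0]) (hB : B = !![-1 / 2, b12; 0, 0])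
    (hR : R = !![-1 / 2, r12; 0, 0]) (hS : S = !![0, 0; 1, 0])
    (U : Set ℂ) (hU : IsOpen U) (hU' : U ⊆ {(0 : ℂ), 1, c}ᶜ)
    (w w' w'' : ℂ → ℂ)
    (hw' : ∀ z ∈ U, HasDerivAt w (w' z) z)
    (hw'' : ∀ z ∈ U, HasDerivAt w' (w'' z) z)
    (hode : ∀ z ∈ U,
      z * (z - 1) * (z - c) * w'' z + (1 / 2) * (3 * z ^ 2 - 2 * (1 + c) * z + c) * w' z
        + (lam + mu * z + gam * z ^ 2) * w z = 0)
    (y : ℂ → Fin 2 → ℂ) (hy : ∀ z : ℂ, y z = ![-c * w' z, w z]) :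
    ∀ z ∈ U,
      HasDerivAt y
        ((z⁻¹ • A + (z - 1)⁻¹ • B + (z - c)⁻¹ • R - c⁻¹ • S).mulVec (y z)) z := by
  intro z hz
  have hzmem := hU' hz
  simp only [Set.mem_compl_iff, Set.mem_insert_iff, Set.mem_singleton_iff, not_or] at hzmem
  obtain ⟨hz0, hz1, hzc⟩ := hzmem
  have hz1' : z - 1 ≠ 0 := sub_ne_zero.mpr hz1
  have hzc' : z - c ≠ 0 := sub_ne_zero.mpr hzc
  have hc1' : (1 : ℂ) - c ≠ 0 := sub_ne_zero.mpr (fun h => hc1 h.symm)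
  have hc1'' : c - 1 ≠ 0 := sub_ne_zero.mpr hc1
  have hd : HasDerivAt y ![-c * w'' z, w' z] z := by
    have hy' : y = fun x => ![-c * w' x, w x] := funext hy
    rw [hy', hasDerivAt_pi]
    intro i
    fin_cases i
    · simpa using (hw'' z hz).const_mul (-c)
    · simpa using hw' z hz
  convert hd using 1
  have hode' := hode z hz
  have hQ : lam * (z - 1) * (z - c) + b12 * (z * (z - c)) + r12 * (z * (z - 1))
      = c * (lam + mu * z + gam * z ^ 2) := by
    rw [hb12, hr12]; field_simp; ring
  funext i
  fin_cases i
  · show (z⁻¹ • A + (z - 1)⁻¹ • B + (z - c)⁻¹ • R - c⁻¹ • S).mulVec (y z) 0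
      = ![-c * w'' z, w' z] 0
    simp only [hy, hA, hB, hR, hS, Matrix.mulVec, Matrix.add_apply, Matrix.sub_apply,
      Matrix.smul_apply, Matrix.cons_val', Matrix.cons_val_zero, Matrix.cons_val_one,
      Matrix.head_cons, Matrix.empty_val', Matrix.cons_val_fin_one, dotProduct,
      Fin.sum_univ_two, smul_eq_mul, ha12, Matrix.of_apply]
    field_simp
    linear_combination (2*c^2) * hode' + (2*c* w z) * hQ
  · show (z⁻¹ • A + (z - 1)⁻¹ • B + (z - c)⁻¹ • R - c⁻¹ • S).mulVec (y z) 1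
      = ![-c * w'' z, w' z] 1
    simp only [hy, hA, hB, hR, hS, Matrix.mulVec, Matrix.add_apply, Matrix.sub_apply,
      Matrix.smul_apply, Matrix.cons_val', Matrix.cons_val_zero, Matrix.cons_val_one,
      Matrix.head_cons, Matrix.empty_val', Matrix.cons_val_fin_one, dotProduct,
      Fin.sum_univ_two, smul_eq_mul, Matrix.of_apply]
    field_simp
    ring
end

section
/- Let c ∈ ℂ \ {0,1} and a₁₂, b₁₂, r₁₂ ∈ ℂ, and define A := [[−1/2, a₁₂],[0,0]], B := [[−1/2, b₁₂],[0,0]], R := [[−1/2, r₁₂],[0,0]], S := [[0,0],[1,0]]. Let U ⊆ ℂ \ {0,1,c} be open and let y : U → ℂ² be differentiable with y′(z) = (A/z + B/(z−1) + R/(z−c) − S/c) y(z) for all z ∈ U. Then w(z) := e₂ᵀ y(z) is twice differentiable on U and satisfies z(z−1)(z−c) w″(z) + (1/2)(3z² − 2(1+c)z + c) w′(z) + (λ + μz + γz²) w(z) = 0 on U, where λ := a₁₂, μ := −(c(a₁₂+b₁₂)+a₁₂+r₁₂)/c, and γ := (a₁₂+b₁₂+r₁₂)/c. -/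
open Matrix

set_option maxHeartbeats 1000000

theorem alg_helper (z c a12 b12 r12 p0 p1 : ℂ) (hz0 : z ≠ 0) (h1 : z-1 ≠ 0) (h2 : z-c ≠ 0) (hc : c ≠ 0) :
  z*(z-1)*(z-c) * (-c⁻¹*(-1/2*(z⁻¹+(z-1)⁻¹+(z-c)⁻¹)*p0 + (a12*z⁻¹+b12*(z-1)⁻¹+r12*(z-c)⁻¹)*p1))
    + (1/2)*(3*z^2-2*(1+c)*z+c)*(-c⁻¹*p0)
    + (a12 + (-(c*(a12+b12)+a12+r12)/c)*z + ((a12+b12+r12)/c)*z^2)*p1 = 0 := by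
  have m1 : z * z⁻¹ = 1 := mul_inv_cancel₀ hz0
  have m2 : (z-1) * (z-1)⁻¹ = 1 := mul_inv_cancel₀ h1
  have m3 : (z-c) * (z-c)⁻¹ = 1 := mul_inv_cancel₀ h2
  have m4 : c * c⁻¹ = 1 := mul_inv_cancel₀ hc
  linear_combination (c⁻¹*(z-1)*(z-c)*((1/2)*p0 - a12*p1)) * m1
    + (c⁻¹*z*(z-c)*((1/2)*p0 - b12*p1)) * m2
    + (c⁻¹*z*(z-1)*((1/2)*p0 - r12*p1)) * m3
    + (-a12*p1) * m4

/-- Converse direction of the correspondence (3.2)–(3.3) of the paper: if `y` solves the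
2×2 first-order system, then `w := e₂ᵀ y` is twice differentiable and solves the angular
ellipsoidal wave equation in algebraic form with `λ := a₁₂`,
`μ := −(c(a₁₂+b₁₂)+a₁₂+r₁₂)/c`, `γ := (a₁₂+b₁₂+r₁₂)/c`. -/
theorem system_to_ellipsoidal
    (c a12 b12 r12 : ℂ) (hc0 : c ≠ 0) (hc1 : c ≠ 1)
    (A B R S : Matrix (Fin 2) (Fin 2) ℂ)
    (hA : A = !![-1 / 2, a12; 0, 0]) (hB : B = !![-1 / 2, b12; 0, 0])
    (hR : R = !![-1 / 2, r12; 0, 0]) (hS : S = !![0, 0; 1, 0])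
    (U : Set ℂ) (hU : IsOpen U) (hU' : U ⊆ {(0 : ℂ), 1, c}ᶜ)
    (y : ℂ → Fin 2 → ℂ)
    (hy : ∀ z ∈ U,
      HasDerivAt y ((z⁻¹ • A + (z - 1)⁻¹ • B + (z - c)⁻¹ • R - c⁻¹ • S).mulVec (y z)) z)
    (w : ℂ → ℂ) (hw : ∀ z : ℂ, w z = (![0, 1] : Fin 2 → ℂ) ⬝ᵥ y z)
    (lam mu gam : ℂ)
    (hlam : lam = a12)
    (hmu : mu = -(c * (a12 + b12) + a12 + r12) / c)
    (hgam : gam = (a12 + b12 + r12) / c) :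
    ∀ z ∈ U,
      HasDerivAt w (deriv w z) z ∧
      HasDerivAt (deriv w) (deriv (deriv w) z) z ∧
      z * (z - 1) * (z - c) * deriv (deriv w) z
        + (1 / 2) * (3 * z ^ 2 - 2 * (1 + c) * z + c) * deriv w z
        + (lam + mu * z + gam * z ^ 2) * w z = 0 := by
  subst hA hB hR hS
  have hw1 : w = fun t => y t 1 := by
    funext t; rw [hw]; simp [dotProduct, Fin.sum_univ_two]
  -- component derivatives on U
  have key : ∀ t ∈ U,
      HasDerivAt (fun s => y s 0)
        ((-1/2) * (t⁻¹ + (t-1)⁻¹ + (t-c)⁻¹) * y t 0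
          + (a12 * t⁻¹ + b12 * (t-1)⁻¹ + r12 * (t-c)⁻¹) * y t 1) t ∧
      HasDerivAt (fun s => y s 1) (-c⁻¹ * y t 0) t := by
    intro t ht
    have h := hy t ht
    have h0 := (hasDerivAt_pi.mp h) 0
    have h1 := (hasDerivAt_pi.mp h) 1
    constructor
    · refine h0.congr_deriv ?_
      simp [Matrix.mulVec, dotProduct, Fin.sum_univ_two]
      ring
    · refine h1.congr_deriv ?_
      simp [Matrix.mulVec, dotProduct, Fin.sum_univ_two]
  have hwd : ∀ t ∈ U, HasDerivAt w (-c⁻¹ * y t 0) t := by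
    intro t ht
    rw [hw1]
    exact (key t ht).2
  have hderiv_eq : ∀ t ∈ U, deriv w t = -c⁻¹ * y t 0 := fun t ht => (hwd t ht).deriv
  intro z hz
  have hznot := hU' hz
  simp only [Set.mem_compl_iff, Set.mem_insert_iff, Set.mem_singleton_iff, not_or] at hznot
  obtain ⟨hz0, hz1, hzc⟩ := hznot
  have hz1' : z - 1 ≠ 0 := sub_ne_zero.mpr hz1
  have hzc' : z - c ≠ 0 := sub_ne_zero.mpr hzc
  have h1 : HasDerivAt w (deriv w z) z := by
    rw [hderiv_eq z hz]; exact hwd z hz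
  -- second derivative
  have hEE : deriv w =ᶠ[nhds z] fun t => -c⁻¹ * y t 0 :=
    Filter.eventuallyEq_of_mem (hU.mem_nhds hz) (fun t ht => hderiv_eq t ht)
  have h2' : HasDerivAt (fun t => -c⁻¹ * y t 0)
      (-c⁻¹ * ((-1/2) * (z⁻¹ + (z-1)⁻¹ + (z-c)⁻¹) * y z 0
          + (a12 * z⁻¹ + b12 * (z-1)⁻¹ + r12 * (z-c)⁻¹) * y z 1)) z :=
    (key z hz).1.const_mul _
  have h2 : HasDerivAt (deriv w)
      (-c⁻¹ * ((-1/2) * (z⁻¹ + (z-1)⁻¹ + (z-c)⁻¹) * y z 0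
          + (a12 * z⁻¹ + b12 * (z-1)⁻¹ + r12 * (z-c)⁻¹) * y z 1)) z :=
    h2'.congr_of_eventuallyEq hEE
  have hdd : deriv (deriv w) z = -c⁻¹ * ((-1/2) * (z⁻¹ + (z-1)⁻¹ + (z-c)⁻¹) * y z 0
          + (a12 * z⁻¹ + b12 * (z-1)⁻¹ + r12 * (z-c)⁻¹) * y z 1) := h2.deriv
  refine ⟨h1, by rw [hdd]; exact h2, ?_⟩
  rw [hdd, hderiv_eq z hz, hw1, hlam, hmu, hgam]
  exact alg_helper z c a12 b12 r12 (y z 0) (y z 1) hz0 hz1' hzc' hc0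
end

section
/- Let c ∈ ℂ \ {0,1} and a₁₂, b₁₂, r₁₂ ∈ ℂ, and for parameters (a, b, r, e) write M(a,b,r,e; z) := [[−1/2, a],[0,0]]/z + [[−1/2, b],[0,0]]/(z−1) + [[−1/2, r],[0,0]]/(z−e) − (1/e)[[0,0],[1,0]]. Let U be open in ℂ and y : U → ℂ² differentiable with y′(z) = M(a₁₂, b₁₂, r₁₂, c; z) y(z) on U. Set ĉ := c/(c−1) and define ŷ(ẑ) := [[−1,0],[0,1]] · y(c + (1−c)ẑ). Then ŷ is differentiable at every ẑ with c + (1−c)ẑ ∈ U and ẑ ∉ {0, 1, ĉ}, and there satisfies ŷ′(ẑ) = M(−r₁₂, −b₁₂, −a₁₂, ĉ; ẑ) ŷ(ẑ). In particular, the affine map z = c + (1−c)ẑ carries the singular points z = c and z = 1 to ẑ = 0 and ẑ = 1 respectively. -/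
open Matrix

/-- The transformation (3.5)–(3.7) of the paper: the affine substitution `z = c + (1−c)ẑ`
together with `ŷ = diag(−1,1)·y` carries the first-order system with parameters
`(a₁₂, b₁₂, r₁₂, c)` to the system of the same structure with parameters
`(−r₁₂, −b₁₂, −a₁₂, ĉ)`, `ĉ := c/(c−1)`; it maps `z = c` to `ẑ = 0` and `z = 1` to
`ẑ = 1`. -/
theorem ellipsoidal_system_reflection
    (c a12 b12 r12 : ℂ) (hc0 : c ≠ 0) (hc1 : c ≠ 1)
    (M : ℂ → ℂ → ℂ → ℂ → ℂ → Matrix (Fin 2) (Fin 2) ℂ)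
    (hM : ∀ a b r e z : ℂ,
      M a b r e z = z⁻¹ • !![-1 / 2, a; 0, 0] + (z - 1)⁻¹ • !![-1 / 2, b; 0, 0]
        + (z - e)⁻¹ • !![-1 / 2, r; 0, 0] - e⁻¹ • !![0, 0; 1, 0])
    (U : Set ℂ) (hU : IsOpen U)
    (y : ℂ → Fin 2 → ℂ)
    (hy : ∀ z ∈ U, HasDerivAt y ((M a12 b12 r12 c z).mulVec (y z)) z)
    (yh : ℂ → Fin 2 → ℂ)
    (hyh : ∀ zh : ℂ, yh zh = (!![-1, 0; 0, 1] : Matrix (Fin 2) (Fin 2) ℂ).mulVec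
      (y (c + (1 - c) * zh))) :
    (∀ zh : ℂ, (c + (1 - c) * zh) ∈ U → zh ≠ 0 → zh ≠ 1 → zh ≠ c / (c - 1) →
      HasDerivAt yh ((M (-r12) (-b12) (-a12) (c / (c - 1)) zh).mulVec (yh zh)) zh)
    ∧ c + (1 - c) * 0 = c ∧ c + (1 - c) * 1 = 1 := by
  refine ⟨?_, by ring, by ring⟩
  intro zh hmem h0 h1 hch
  have h1c : (1 : ℂ) - c ≠ 0 := sub_ne_zero.mpr (Ne.symm hc1)
  have hcm1 : c - 1 ≠ 0 := sub_ne_zero.mpr hc1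
  have hch' : zh - c / (c - 1) ≠ 0 := sub_ne_zero.mpr hch
  have h1' : zh - 1 ≠ 0 := sub_ne_zero.mpr h1
  have hcc : c / (c - 1) ≠ 0 := div_ne_zero hc0 hcm1
  have hA : c + (1 - c) * zh ≠ 0 := by
    have e : c + (1 - c) * zh = (1 - c) * (zh - c / (c - 1)) := by
      field_simp; ring
    rw [e]; exact mul_ne_zero h1c hch'
  have hB : c + (1 - c) * zh - 1 ≠ 0 := by
    have e : c + (1 - c) * zh - 1 = (1 - c) * (zh - 1) := by ring
    rw [e]; exact mul_ne_zero h1c h1'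
  have hC : c + (1 - c) * zh - c ≠ 0 := by
    have e : c + (1 - c) * zh - c = (1 - c) * zh := by ring
    rw [e]; exact mul_ne_zero h1c h0
  have hφ : HasDerivAt (fun w : ℂ => c + (1 - c) * w) (1 - c) zh := by
    simpa using ((hasDerivAt_id zh).const_mul (1 - c)).const_add c
  have hcomp : HasDerivAt (fun w => y (c + (1 - c) * w))
      ((1 - c) • (M a12 b12 r12 c (c + (1 - c) * zh)).mulVec (y (c + (1 - c) * zh))) zh := by
    simpa [Function.comp_def] using (hy _ hmem).scomp zh hφ
  have key : HasDerivAt yh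
      ((!![-1, 0; 0, 1] : Matrix (Fin 2) (Fin 2) ℂ).mulVec
        ((1 - c) • (M a12 b12 r12 c (c + (1 - c) * zh)).mulVec (y (c + (1 - c) * zh)))) zh := by
    rw [funext hyh, hasDerivAt_pi]
    intro i
    fin_cases i
    · simpa [Matrix.mulVec, dotProduct, Fin.sum_univ_two, Pi.neg_def] using
        (hasDerivAt_pi.mp hcomp 0).neg
    · simpa [Matrix.mulVec, dotProduct, Fin.sum_univ_two] using
        hasDerivAt_pi.mp hcomp 1
  have hw1 : (1 - c) * (c + (1 - c) * zh - c)⁻¹ = zh⁻¹ := by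
    rw [show c + (1 - c) * zh - c = (1 - c) * zh from by ring, mul_inv,
      ← mul_assoc, mul_inv_cancel₀ h1c, one_mul]
  have hw2 : (1 - c) * (c + (1 - c) * zh - 1)⁻¹ = (zh - 1)⁻¹ := by
    rw [show c + (1 - c) * zh - 1 = (1 - c) * (zh - 1) from by ring, mul_inv,
      ← mul_assoc, mul_inv_cancel₀ h1c, one_mul]
  have hw3 : (1 - c) * (c + (1 - c) * zh)⁻¹ = (zh - c / (c - 1))⁻¹ := by
    rw [show c + (1 - c) * zh = (1 - c) * (zh - c / (c - 1)) from by field_simp; ring,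
      mul_inv, ← mul_assoc, mul_inv_cancel₀ h1c, one_mul]
  have hw4 : (c / (c - 1))⁻¹ = -((1 - c) * c⁻¹) := by
    field_simp
    ring
  convert key using 1
  funext i
  fin_cases i <;>
  · simp only [hM, hyh, Matrix.mulVec, dotProduct, Fin.sum_univ_two,
      Matrix.add_apply, Matrix.sub_apply, Matrix.smul_apply, Matrix.cons_val_zero,
      Matrix.cons_val_one, Matrix.head_cons, Matrix.head_fin_const, smul_eq_mul, Fin.mk_zero, Fin.mk_one, Matrix.of_apply, Matrix.cons_val', Matrix.cons_val_fin_one, Matrix.empty_val',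
      Pi.smul_apply]
    rw [← hw1, ← hw2, ← hw3, hw4]
    ring
end

section
/- Let μ, t, γ² ∈ ℂ and define A := [[−μ/2−1, −t],[0, μ/2]], B := [[−μ/2−1, t],[0, μ/2]], G₀ := [[0, −4γ²],[1, 0]], K := diag(−1,1). Then KAK = B, KBK = A and KG₀K = −G₀. Consequently, if U ⊆ ℂ \ {0,1} is open and y : U → ℂ² is differentiable with y′(z) = (A/z + B/(z−1) + G₀) y(z) on U, then ỹ(z) := K y(1−z) is differentiable on {z ∈ ℂ : 1−z ∈ U} \ {0,1} and satisfies ỹ′(z) = (A/z + B/(z−1) + G₀) ỹ(z) there. -/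
open Matrix

set_option maxHeartbeats 1600000

/-- The symmetry of the spheroidal system under `z ↦ 1−z` (Section 4 of the paper):
`KAK = B`, `KBK = A`, `KG₀K = −G₀`, and consequently `ỹ(z) := K y(1−z)` solves the
same first-order system as `y`. -/
theorem spheroidal_system_symmetry
    (μ t γsq : ℂ)
    (A B G₀ K : Matrix (Fin 2) (Fin 2) ℂ)
    (hA : A = !![-μ / 2 - 1, -t; 0, μ / 2])
    (hB : B = !![-μ / 2 - 1, t; 0, μ / 2])
    (hG : G₀ = !![0, -4 * γsq; 1, 0])
    (hK : K = !![-1, 0; 0, 1]) :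
    K * A * K = B ∧ K * B * K = A ∧ K * G₀ * K = -G₀ ∧
    ∀ (U : Set ℂ), IsOpen U → U ⊆ {(0 : ℂ), 1}ᶜ →
      ∀ y : ℂ → Fin 2 → ℂ,
        (∀ z ∈ U, HasDerivAt y ((z⁻¹ • A + (z - 1)⁻¹ • B + G₀).mulVec (y z)) z) →
        ∀ z : ℂ, (1 - z) ∈ U → z ≠ 0 → z ≠ 1 →
          HasDerivAt (fun w => K.mulVec (y (1 - w)))
            ((z⁻¹ • A + (z - 1)⁻¹ • B + G₀).mulVec (K.mulVec (y (1 - z)))) z := by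
  subst hA hB hG hK
  refine ⟨?_, ?_, ?_, ?_⟩
  · ext i j; fin_cases i <;> fin_cases j <;>
      simp [Matrix.mul_apply, Fin.sum_univ_two] <;> ring
  · ext i j; fin_cases i <;> fin_cases j <;>
      simp [Matrix.mul_apply, Fin.sum_univ_two] <;> ring
  · ext i j; fin_cases i <;> fin_cases j <;>
      simp [Matrix.mul_apply, Fin.sum_univ_two] <;> ring
  · intro U hU hUc y hy z hz hz0 hz1
    set K : Matrix (Fin 2) (Fin 2) ℂ := !![-1, 0; 0, 1] with hKdef
    have h := hy (1 - z) hz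
    have hneg : HasDerivAt (fun w : ℂ => 1 - w) (-1 : ℂ) z := by
      simpa using ((hasDerivAt_id z).const_sub 1)
    have h2 : HasDerivAt (fun w => y (1 - w))
        ((-1 : ℂ) • (((1 - z)⁻¹ • !![-μ / 2 - 1, -t; 0, μ / 2] +
          ((1 - z) - 1)⁻¹ • !![-μ / 2 - 1, t; 0, μ / 2] +
          !![0, -4 * γsq; 1, 0]).mulVec (y (1 - z)))) z :=
      HasDerivAt.scomp z h hneg
    have h3 := (K.mulVecLin.toContinuousLinearMap.hasFDerivAt).comp_hasDerivAt z h2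
    have h4 : HasDerivAt (fun w => K.mulVec (y (1 - w)))
        (K.mulVec ((-1 : ℂ) • (((1 - z)⁻¹ • !![-μ / 2 - 1, -t; 0, μ / 2] +
          ((1 - z) - 1)⁻¹ • !![-μ / 2 - 1, t; 0, μ / 2] +
          !![0, -4 * γsq; 1, 0]).mulVec (y (1 - z))))) z := by
      simpa [Function.comp_def, Matrix.mulVecLin_apply] using h3
    convert h4 using 1
    have hz1' : (1 : ℂ) - z ≠ 0 := sub_ne_zero.mpr (Ne.symm hz1)
    have hz1'' : z - 1 ≠ 0 := sub_ne_zero.mpr hz1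
    rw [Matrix.mulVec_mulVec, Matrix.mulVec_smul, Matrix.mulVec_mulVec,
      ← Matrix.smul_mulVec]
    have hmat : ((z⁻¹ • !![-μ / 2 - 1, -t; 0, μ / 2] +
          (z - 1)⁻¹ • !![-μ / 2 - 1, t; 0, μ / 2] + !![0, -4 * γsq; 1, 0]) * K) =
        ((-1 : ℂ) • (K * ((1 - z)⁻¹ • !![-μ / 2 - 1, -t; 0, μ / 2] +
          (1 - z - 1)⁻¹ • !![-μ / 2 - 1, t; 0, μ / 2] + !![0, -4 * γsq; 1, 0]))) := by
      have e1 : ((1 : ℂ) - z - 1)⁻¹ = -z⁻¹ := by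
        rw [show (1 : ℂ) - z - 1 = -z by ring, inv_neg]
      have e2 : ((1 : ℂ) - z)⁻¹ = -(z - 1)⁻¹ := by
        rw [show (1 : ℂ) - z = -(z - 1) by ring, inv_neg]
      rw [e1, e2]
      ext i j
      fin_cases i <;> fin_cases j <;>
        simp [Matrix.mul_apply, Fin.sum_univ_two, hKdef, Matrix.smul_apply, smul_eq_mul] <;>
        ring
    rw [hmat]
end
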